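/- arXiv:1212.1423 — 5 statements merged into one kernel-verified Lean document; each statement's English description precedes it below -/
import Mathlib

section
/- Let n ≥ 1, 1 < p ≤ q < ∞ with p' = p/(p-1), let v, w be weights on ℝⁿ, and let α ∈ (0,1). Suppose A(α) := sup_{t>0} (∫_{|y|<t} v(y)^{-p'} dy)^{α/p'} · (∫_{|x|>t} [ (∫_{|y|<|x|} v(y)^{-p'} dy)^{(1-α)/p'} · w(x) ]^q dx)^{1/q} < ∞. Then for every measurable f ≥ 0 one has (∫_{ℝⁿ} (Hf(x) · w(x))^q dx)^{1/q} ≤ (1-α)^{-1/p'} · A(α) · (∫_{ℝⁿ} (f(x) · v(x))^p dx)^{1/p}. -/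
open MeasureTheory ENNReal Metric Set Function

lemma meas_sublevel_le {E : Type*} [NormedAddCommGroup E] [MeasurableSpace E]
    (μ : Measure E) (hsph : ∀ r : ℝ, μ (sphere (0:E) r) = 0) (s : ℝ≥0∞) :
    μ {y : E | μ (ball (0:E) ‖y‖) < s} ≤ s := by
  rcases eq_or_ne s 0 with rfl | hs
  · simp
  have hball_mono : ∀ {r₁ r₂ : ℝ}, r₁ ≤ r₂ → μ (ball (0:E) r₁) ≤ μ (ball (0:E) r₂) :=
    fun h => measure_mono (ball_subset_ball h)
  set T : Set ℝ := {r : ℝ | μ (ball (0:E) r) < s} with hT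
  have h0T : (0:ℝ) ∈ T := by simp [hT, pos_iff_ne_zero.mpr hs]
  by_cases hbdd : BddAbove T
  · set r₀ := sSup T with hr₀
    have hsub : {y : E | μ (ball (0:E) ‖y‖) < s} ⊆ closedBall (0:E) r₀ := by
      intro y hy
      rw [mem_closedBall_zero_iff]
      exact le_csSup hbdd hy
    refine (measure_mono hsub).trans ?_
    have h1 : μ (closedBall (0:E) r₀) ≤ μ (ball (0:E) r₀) := by
      rw [← ball_union_sphere]
      refine (measure_union_le _ _).trans ?_
      simp [hsph r₀]
    refine h1.trans ?_
    have h2 : ball (0:E) r₀ = ⋃ k : ℕ, ball (0:E) (r₀ - 1/(k+1)) := by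
      ext y
      simp only [mem_ball_zero_iff, mem_iUnion]
      constructor
      · intro hy
        obtain ⟨k, hk⟩ := exists_nat_one_div_lt (show 0 < r₀ - ‖y‖ by linarith)
        exact ⟨k, by linarith⟩
      · rintro ⟨k, hk⟩
        have : (0:ℝ) < 1/(k+1) := by positivity
        linarith
    rw [h2]
    have hmono : Monotone fun k : ℕ => ball (0:E) (r₀ - 1/(k+1)) := by
      intro i j hij
      apply ball_subset_ball
      have : (1:ℝ)/(j+1) ≤ 1/(i+1) := by
        apply one_div_le_one_div_of_le (by positivity)
        exact_mod_cast by omega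
      linarith
    rw [hmono.measure_iUnion]
    refine iSup_le fun k => ?_
    have : (0:ℝ) < 1/(k+1) := by positivity
    obtain ⟨r, hrT, hrlt⟩ := exists_lt_of_lt_csSup ⟨0, h0T⟩ (show r₀ - 1/(k+1) < r₀ by linarith)
    exact (hball_mono hrlt.le).trans hrT.le
  · refine (measure_mono (subset_univ _)).trans ?_
    have h2 : (univ : Set E) = ⋃ k : ℕ, ball (0:E) k := by
      ext y
      simp only [mem_univ, mem_iUnion, mem_ball_zero_iff, true_iff]
      obtain ⟨k, hk⟩ := exists_nat_gt ‖y‖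
      exact ⟨k, hk⟩
    rw [h2]
    have hmono : Monotone fun k : ℕ => ball (0:E) k := fun i j hij =>
      ball_subset_ball (by exact_mod_cast hij)
    rw [hmono.measure_iUnion]
    refine iSup_le fun k => ?_
    obtain ⟨r, hrT, hrlt⟩ := not_bddAbove_iff.mp hbdd k
    exact (hball_mono hrlt.le).trans hrT.le

lemma lint_Ioi_rpow {a c : ℝ} (ha : a < -1) (hc : 0 < c) :
    ∫⁻ s in Ioi c, ENNReal.ofReal (s ^ a) = ENNReal.ofReal (-c ^ (a+1) / (a+1)) := by
  rw [← integral_Ioi_rpow_of_lt ha hc]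
  rw [← ofReal_integral_eq_lintegral_ofReal (integrableOn_Ioi_rpow_of_lt ha hc)]
  filter_upwards [ae_restrict_mem measurableSet_Ioi] with x hx
  exact Real.rpow_nonneg (hc.trans hx).le a

lemma lint_Ioc_rpow {a c : ℝ} (ha : -1 < a) (hc : 0 < c) :
    ∫⁻ s in Ioc 0 c, ENNReal.ofReal (s ^ a) = ENNReal.ofReal (c ^ (a+1) / (a+1)) := by
  have hint : IntegrableOn (fun s : ℝ => s ^ a) (Ioc 0 c) := by
    have := intervalIntegral.intervalIntegrable_rpow' (a := 0) (b := c) ha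
    rwa [intervalIntegrable_iff_integrableOn_Ioc_of_le hc.le] at this
  have hval : ∫ s in Ioc 0 c, s ^ a = c ^ (a+1) / (a+1) := by
    rw [← intervalIntegral.integral_of_le hc.le]
    rw [integral_rpow (Or.inl ha)]
    rw [Real.zero_rpow (by linarith)]
    ring
  rw [← hval, ← ofReal_integral_eq_lintegral_ofReal hint]
  filter_upwards [ae_restrict_mem measurableSet_Ioc] with x hx
  exact Real.rpow_nonneg hx.1.le a

lemma rpow_neg_eq_lintegral {α : ℝ} (hα0 : 0 < α) (hα1 : α < 1) {c : ℝ≥0∞} (hc : c ≠ 0) :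
    c ^ (-α) = ENNReal.ofReal α *
      ∫⁻ s in Ioi (0:ℝ),
        {s : ℝ | c < ENNReal.ofReal s}.indicator (fun s => ENNReal.ofReal (s ^ (-α - 1))) s := by
  have hSmeas : MeasurableSet {s : ℝ | c < ENNReal.ofReal s} :=
    ENNReal.measurable_ofReal measurableSet_Ioi
  rcases eq_or_ne c ⊤ with rfl | hctop
  · have : {s : ℝ | (⊤:ℝ≥0∞) < ENNReal.ofReal s} = ∅ := by
      ext s; simp [(ENNReal.ofReal_lt_top).not_gt]
    simp [this, ENNReal.top_rpow_of_neg (neg_neg_of_pos hα0)]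
  · set c₀ := c.toReal with hc₀def
    have hc₀ : 0 < c₀ := ENNReal.toReal_pos hc hctop
    have hcc : c = ENNReal.ofReal c₀ := (ENNReal.ofReal_toReal hctop).symm
    rw [lintegral_indicator hSmeas, Measure.restrict_restrict hSmeas]
    have hset : {s : ℝ | c < ENNReal.ofReal s} ∩ Ioi (0:ℝ) = Ioi c₀ := by
      ext s
      simp only [mem_inter_iff, mem_setOf_eq, mem_Ioi]
      constructor
      · rintro ⟨h1, h2⟩
        rw [hcc, ENNReal.ofReal_lt_ofReal_iff h2] at h1
        exact h1
      · intro h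
        have h2 : 0 < s := hc₀.trans h
        exact ⟨by rw [hcc, ENNReal.ofReal_lt_ofReal_iff h2]; exact h, h2⟩
    rw [hset, lint_Ioi_rpow (by linarith) hc₀]
    have : -α - 1 + 1 = -α := by ring
    rw [this]
    rw [← ENNReal.ofReal_mul hα0.le]
    rw [hcc, ENNReal.ofReal_rpow_of_pos hc₀]
    congr 1
    field_simp

lemma my_iSup_rpow {ι : Sort*} (f : ι → ℝ≥0∞) {r : ℝ} (hr : 0 < r) :
    (⨆ i, f i) ^ r = ⨆ i, (f i) ^ r := by
  apply le_antisymm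
  · have h1 : (⨆ i, f i) ≤ (⨆ i, (f i) ^ r) ^ (1/r) := by
      refine iSup_le fun i => ?_
      have : f i = ((f i) ^ r) ^ (1/r) := by
        rw [← ENNReal.rpow_mul, mul_one_div, div_self hr.ne', ENNReal.rpow_one]
      rw [this]
      exact ENNReal.rpow_le_rpow (le_iSup (fun i => (f i)^r) i) (by positivity)
    calc (⨆ i, f i) ^ r ≤ ((⨆ i, (f i) ^ r) ^ (1/r)) ^ r :=
          ENNReal.rpow_le_rpow h1 hr.le
      _ = ⨆ i, (f i) ^ r := by
          rw [← ENNReal.rpow_mul, one_div_mul_cancel hr.ne', ENNReal.rpow_one]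
  · exact iSup_le fun i => ENNReal.rpow_le_rpow (le_iSup _ i) hr.le

lemma my_iSup_mul_iSup {a b : ℕ → ℝ≥0∞} (ha : Monotone a) (hb : Monotone b) :
    (⨆ k, a k) * (⨆ k, b k) = ⨆ k, a k * b k := by
  apply le_antisymm
  · rw [ENNReal.iSup_mul]
    refine iSup_le fun i => ?_
    rw [ENNReal.mul_iSup]
    refine iSup_le fun j => ?_
    refine le_iSup_of_le (max i j) ?_
    exact mul_le_mul' (ha (le_max_left i j)) (hb (le_max_right i j))
  · exact iSup_le fun k => mul_le_mul' (le_iSup _ k) (le_iSup _ k)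

lemma my_sup_min (c : ℝ≥0∞) : (⨆ m : ℕ, min c (m:ℝ≥0∞)) = c := by
  apply le_antisymm (iSup_le fun m => min_le_left _ _)
  have h : c ⊓ (⨆ m : ℕ, (m:ℝ≥0∞)) = ⨆ m : ℕ, c ⊓ (m:ℝ≥0∞) := inf_iSup_eq _ _
  calc c = c ⊓ ⊤ := (inf_top_eq c).symm
    _ = ⨆ m : ℕ, c ⊓ (m:ℝ≥0∞) := by rw [← ENNReal.iSup_natCast, h]
    _ ≤ ⨆ m : ℕ, min c (m:ℝ≥0∞) := by
        refine iSup_le fun m => le_iSup_of_le m ?_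
        exact le_rfl


section
variable {En : Type*} [NormedAddCommGroup En] [MeasureSpace En] [BorelSpace En]
  [SigmaFinite (volume : Measure En)]

lemma minkowski_fin (ν : Measure En) [SigmaFinite ν] (φ : En → ℝ≥0∞) (hφ : Measurable φ)
    {r : ℝ} (hr : 1 ≤ r)
    (hI : (∫⁻ x, (∫⁻ y in ball (0:En) ‖x‖, φ y) ^ r ∂ν) ≠ ⊤) :
    (∫⁻ x, (∫⁻ y in ball (0:En) ‖x‖, φ y) ^ r ∂ν) ^ (1/r)
      ≤ ∫⁻ y, φ y * (ν {x : En | ‖y‖ < ‖x‖}) ^ (1/r) := by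
  have hr0 : (0:ℝ) < r := lt_of_lt_of_le one_pos hr
  classical
  -- the kernel
  set k : En × En → ℝ≥0∞ := fun z => if ‖z.2‖ < ‖z.1‖ then φ z.2 else 0 with hkdef
  have hkset : MeasurableSet {z : En × En | ‖z.2‖ < ‖z.1‖} :=
    measurableSet_lt measurable_snd.norm measurable_fst.norm
  have hk : Measurable k := Measurable.ite hkset (hφ.comp measurable_snd) measurable_const
  set Φ : ℝ → ℝ≥0∞ := fun t => ∫⁻ y in ball (0:En) t, φ y with hΦdef
  have hΦk : ∀ x : En, Φ ‖x‖ = ∫⁻ y, k (x, y) := by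
    intro x
    rw [hΦdef]
    simp only
    rw [← lintegral_indicator measurableSet_ball]
    refine lintegral_congr fun y => ?_
    by_cases h : ‖y‖ < ‖x‖ <;>
      simp [hkdef, Set.indicator_apply, mem_ball_zero_iff, h]
  have hsety : ∀ y : En, MeasurableSet {x : En | ‖y‖ < ‖x‖} :=
    fun y => measurableSet_lt measurable_const measurable_norm
  have hΦmono : Monotone Φ := fun t₁ t₂ h =>
    lintegral_mono' (Measure.restrict_mono (ball_subset_ball h) le_rfl) le_rfl
  have hΦm : Measurable fun x : En => Φ ‖x‖ := hΦmono.measurable.comp measurable_norm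
  have hky : ∀ y : En, (∫⁻ x, k (x, y) ∂ν) = φ y * ν {x : En | ‖y‖ < ‖x‖} := by
    intro y
    have h1 : ∀ x : En, k (x, y) = ({x : En | ‖y‖ < ‖x‖}).indicator (fun _ => φ y) x := by
      intro x
      by_cases h : ‖y‖ < ‖x‖ <;> simp [hkdef, Set.indicator_apply, h]
    rw [lintegral_congr h1, lintegral_indicator (hsety y), setLIntegral_const]
  set I := ∫⁻ x, (Φ ‖x‖) ^ r ∂ν with hIdef
  rcases eq_or_lt_of_le hr with hr1 | hr1
  · -- r = 1 : Tonelli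
    have hEq : I = ∫⁻ y, φ y * ν {x : En | ‖y‖ < ‖x‖} := by
      calc I = ∫⁻ x, ∫⁻ y, k (x, y) ∂volume ∂ν := by
              rw [hIdef]
              refine lintegral_congr fun x => ?_
              rw [← hr1, ENNReal.rpow_one, hΦk x]
        _ = ∫⁻ y, ∫⁻ x, k (x, y) ∂ν ∂volume := lintegral_lintegral_swap hk.aemeasurable
        _ = _ := lintegral_congr hky
    rw [← hr1]
    simp [hEq]
  · -- r > 1
    by_cases hI0 : I = 0
    · rw [hI0, ENNReal.zero_rpow_of_pos (by positivity)]
      exact zero_le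
    have hrne : r - 1 ≠ 0 := by linarith
    set r' : ℝ := r / (r - 1) with hr'def
    have hconj : Real.HolderConjugate r r' := by
      rw [Real.holderConjugate_iff]
      constructor
      · exact hr1
      · rw [hr'def]
        field_simp
        ring
    have hconj' : Real.HolderConjugate r' r := hconj.symm
    have hr'0 : (0:ℝ) < r' := hconj'.pos
    have hsum : 1/r' + 1/r = 1 := by
      rw [one_div, one_div]; exact hconj'.inv_add_inv_eq_one
    have hrr' : (r - 1) * r' = r := by
      rw [hr'def]
      field_simp
    have hfin : ∀ᵐ x ∂ν, Φ ‖x‖ < ⊤ := by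
      filter_upwards [ae_lt_top (hΦm.pow_const r) hI] with x hx
      exact (ENNReal.rpow_lt_top_iff_of_pos hr0).mp hx
    have step1 : I = ∫⁻ x, (Φ ‖x‖) ^ (r - 1) * Φ ‖x‖ ∂ν := by
      rw [hIdef]
      refine lintegral_congr_ae ?_
      filter_upwards [hfin] with x hx
      rcases eq_or_ne (Φ ‖x‖) 0 with h0 | h0
      · rw [h0, ENNReal.zero_rpow_of_pos hr0, mul_zero]
      · have e : (Φ ‖x‖) ^ (r - 1) * (Φ ‖x‖) ^ (1:ℝ) = (Φ ‖x‖) ^ r := by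
          rw [← ENNReal.rpow_add _ _ h0 hx.ne]
          norm_num
        rw [← e, ENNReal.rpow_one]
    have step2 : I = ∫⁻ y, ∫⁻ x, (Φ ‖x‖) ^ (r - 1) * k (x, y) ∂ν ∂volume := by
      rw [step1]
      have h1 : ∀ x : En, (Φ ‖x‖) ^ (r - 1) * Φ ‖x‖
          = ∫⁻ y, (Φ ‖x‖) ^ (r - 1) * k (x, y) ∂volume := by
        intro x
        have hkx : Measurable fun y : En => k (x, y) := hk.comp measurable_prodMk_left
        rw [hΦk x, lintegral_const_mul _ hkx]
      rw [lintegral_congr h1]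
      exact lintegral_lintegral_swap
        (((hΦm.comp measurable_fst).pow_const _).mul hk).aemeasurable
    have inner_bd : ∀ y : En, (∫⁻ x, (Φ ‖x‖) ^ (r - 1) * k (x, y) ∂ν)
        ≤ φ y * (I ^ (1/r') * (ν {x : En | ‖y‖ < ‖x‖}) ^ (1/r)) := by
      intro y
      have hrw : ∀ x : En, (Φ ‖x‖) ^ (r - 1) * k (x, y)
          = ({x : En | ‖y‖ < ‖x‖}).indicator (fun x => (Φ ‖x‖) ^ (r - 1) * φ y) x := by
        intro x
        by_cases h : ‖y‖ < ‖x‖ <;> simp [hkdef, Set.indicator_apply, h]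
      have hH := ENNReal.lintegral_mul_le_Lp_mul_Lq (ν.restrict {x : En | ‖y‖ < ‖x‖})
        hconj' (f := fun x => (Φ ‖x‖) ^ (r - 1)) (g := fun _ => 1)
        ((hΦm.pow_const _).aemeasurable) aemeasurable_const
      simp only [Pi.mul_apply, mul_one, ENNReal.one_rpow, lintegral_one,
        Measure.restrict_apply_univ] at hH
      have e1 : ∀ x : En, ((Φ ‖x‖) ^ (r - 1)) ^ r' = (Φ ‖x‖) ^ r := by
        intro x
        rw [← ENNReal.rpow_mul, hrr']
      simp only [e1] at hH
      calc (∫⁻ x, (Φ ‖x‖) ^ (r - 1) * k (x, y) ∂ν)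
          = ∫⁻ x in {x : En | ‖y‖ < ‖x‖}, (Φ ‖x‖) ^ (r - 1) * φ y ∂ν := by
            rw [lintegral_congr hrw, lintegral_indicator (hsety y)]
        _ = (∫⁻ x in {x : En | ‖y‖ < ‖x‖}, (Φ ‖x‖) ^ (r - 1) ∂ν) * φ y := by
            rw [lintegral_mul_const _ (hΦm.pow_const _)]
        _ ≤ ((∫⁻ x in {x : En | ‖y‖ < ‖x‖}, (Φ ‖x‖) ^ r ∂ν) ^ (1/r')
              * (ν {x : En | ‖y‖ < ‖x‖}) ^ (1/r)) * φ y :=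
            mul_le_mul_left hH _
        _ ≤ (I ^ (1/r') * (ν {x : En | ‖y‖ < ‖x‖}) ^ (1/r)) * φ y :=
            mul_le_mul_left (mul_le_mul_left
              (ENNReal.rpow_le_rpow (setLIntegral_le_lintegral _ _) (by positivity)) _) _
        _ = φ y * (I ^ (1/r') * (ν {x : En | ‖y‖ < ‖x‖}) ^ (1/r)) := mul_comm _ _
    have step5 : I ≤ I ^ (1/r') * ∫⁻ y, φ y * (ν {x : En | ‖y‖ < ‖x‖}) ^ (1/r) := by
      calc I = ∫⁻ y, ∫⁻ x, (Φ ‖x‖) ^ (r - 1) * k (x, y) ∂ν ∂volume := step2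
        _ ≤ ∫⁻ y, φ y * (I ^ (1/r') * (ν {x : En | ‖y‖ < ‖x‖}) ^ (1/r)) ∂volume :=
            lintegral_mono inner_bd
        _ = I ^ (1/r') * ∫⁻ y, φ y * (ν {x : En | ‖y‖ < ‖x‖}) ^ (1/r) := by
            rw [← lintegral_const_mul' _ _ (ENNReal.rpow_ne_top_of_nonneg (by positivity) hI)]
            exact lintegral_congr fun y => by ring
    have ha0 : I ^ (1/r') ≠ 0 :=
      (ENNReal.rpow_pos (pos_iff_ne_zero.mpr hI0) hI).ne'
    have hatop : I ^ (1/r') ≠ ⊤ := ENNReal.rpow_ne_top_of_nonneg (by positivity) hI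
    have key : I ^ (1/r') * I ^ (1/r)
        ≤ I ^ (1/r') * ∫⁻ y, φ y * (ν {x : En | ‖y‖ < ‖x‖}) ^ (1/r) := by
      rw [← ENNReal.rpow_add _ _ hI0 hI, hsum, ENNReal.rpow_one]
      exact step5
    exact (ENNReal.mul_le_mul_iff_right ha0 hatop).mp key

lemma minkowski_gen (hball : ∀ R : ℝ, volume (ball (0:En) R) ≠ ⊤)
    (G φ : En → ℝ≥0∞) (hG : Measurable G) (hφ : Measurable φ)
    {r : ℝ} (hr : 1 ≤ r) :
    (∫⁻ x, (∫⁻ y in ball (0:En) ‖x‖, φ y) ^ r * G x) ^ (1/r)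
      ≤ ∫⁻ y, φ y * (∫⁻ x in {x : En | ‖y‖ < ‖x‖}, G x) ^ (1/r) := by
  classical
  have hr0 : (0:ℝ) < r := lt_of_lt_of_le one_pos hr
  have hsety : ∀ y : En, MeasurableSet {x : En | ‖y‖ < ‖x‖} :=
    fun y => measurableSet_lt measurable_const measurable_norm
  set φk : ℕ → En → ℝ≥0∞ :=
    fun m y => if ‖y‖ < (m:ℝ) then min (φ y) m else 0 with hφkdef
  set Gk : ℕ → En → ℝ≥0∞ :=
    fun m x => if ‖x‖ < (m:ℝ) then min (G x) m else 0 with hGkdef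
  have hφkm : ∀ m, Measurable (φk m) := fun m =>
    Measurable.ite (measurableSet_lt measurable_norm measurable_const)
      (hφ.min measurable_const) measurable_const
  have hGkm : ∀ m, Measurable (Gk m) := fun m =>
    Measurable.ite (measurableSet_lt measurable_norm measurable_const)
      (hG.min measurable_const) measurable_const
  have hmin_mono : ∀ (c : ℝ≥0∞) {i j : ℕ}, i ≤ j → min c (i:ℝ≥0∞) ≤ min c (j:ℝ≥0∞) :=
    fun c i j hij => min_le_min le_rfl (by exact_mod_cast hij)
  have hφk_mono : ∀ y : En, Monotone fun m => φk m y := by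
    intro y i j hij
    simp only [hφkdef]
    by_cases h : ‖y‖ < (i:ℝ)
    · have h2 : ‖y‖ < (j:ℝ) := lt_of_lt_of_le h (by exact_mod_cast hij)
      simp only [h, h2, if_true]
      exact hmin_mono _ hij
    · simp [h]
  have hGk_mono : ∀ x : En, Monotone fun m => Gk m x := by
    intro x i j hij
    simp only [hGkdef]
    by_cases h : ‖x‖ < (i:ℝ)
    · have h2 : ‖x‖ < (j:ℝ) := lt_of_lt_of_le h (by exact_mod_cast hij)
      simp only [h, h2, if_true]
      exact hmin_mono _ hij
    · simp [h]
  have hφk_le : ∀ m y, φk m y ≤ φ y := by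
    intro m y
    simp only [hφkdef]
    by_cases h : ‖y‖ < (m:ℝ) <;> simp [h, min_le_left]
  have hGk_le : ∀ m x, Gk m x ≤ G x := by
    intro m x
    simp only [hGkdef]
    by_cases h : ‖x‖ < (m:ℝ) <;> simp [h, min_le_left]
  have hsup_φk : ∀ y : En, (⨆ m, φk m y) = φ y := by
    intro y
    apply le_antisymm (iSup_le fun m => hφk_le m y)
    obtain ⟨m₀, hm₀⟩ := exists_nat_gt ‖y‖
    conv_lhs => rw [← my_sup_min (φ y)]
    refine iSup_le fun m => le_iSup_of_le (m + m₀) ?_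
    have hcond : ‖y‖ < ((m + m₀ : ℕ):ℝ) := by
      push_cast; linarith [Nat.cast_nonneg (α := ℝ) m]
    simp only [hφkdef, hcond, if_true]
    exact hmin_mono _ (Nat.le_add_right m m₀)
  have hsup_Gk : ∀ x : En, (⨆ m, Gk m x) = G x := by
    intro x
    apply le_antisymm (iSup_le fun m => hGk_le m x)
    obtain ⟨m₀, hm₀⟩ := exists_nat_gt ‖x‖
    conv_lhs => rw [← my_sup_min (G x)]
    refine iSup_le fun m => le_iSup_of_le (m + m₀) ?_
    have hcond : ‖x‖ < ((m + m₀ : ℕ):ℝ) := by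
      push_cast; linarith [Nat.cast_nonneg (α := ℝ) m]
    simp only [hGkdef, hcond, if_true]
    exact hmin_mono _ (Nat.le_add_right m m₀)
  -- profiles
  set Φk : ℕ → ℝ → ℝ≥0∞ := fun m t => ∫⁻ y in ball (0:En) t, φk m y with hΦkdef
  have hΦk_mono_t : ∀ m, Monotone (Φk m) := fun m t₁ t₂ h =>
    lintegral_mono' (Measure.restrict_mono (ball_subset_ball h) le_rfl) le_rfl
  have hΦk_meas : ∀ m, Measurable fun x : En => Φk m ‖x‖ := fun m =>
    ((hΦk_mono_t m).measurable).comp measurable_norm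
  have hΦk_mono_m : ∀ t, Monotone fun m => Φk m t := fun t i j hij =>
    lintegral_mono fun y => hφk_mono y hij
  have hΦsup : ∀ t, (⨆ m, Φk m t) = ∫⁻ y in ball (0:En) t, φ y := by
    intro t
    rw [hΦkdef]
    simp only
    rw [← lintegral_iSup (fun m => hφkm m) (fun i j hij y => hφk_mono y hij)]
    exact lintegral_congr fun y => hsup_φk y
  -- bound for truncations
  set B : ℕ → ℝ≥0∞ := fun m => (m:ℝ≥0∞) * volume (ball (0:En) (m:ℝ)) with hBdef
  have hBne : ∀ m, B m ≠ ⊤ := fun m =>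
    (ENNReal.mul_lt_top (ENNReal.natCast_lt_top m) (lt_top_iff_ne_top.mpr (hball m))).ne
  have htot : ∀ m, (∫⁻ y, φk m y) ≤ B m := by
    intro m
    calc (∫⁻ y, φk m y) ≤ ∫⁻ y, (ball (0:En) (m:ℝ)).indicator (fun _ => (m:ℝ≥0∞)) y := by
          refine lintegral_mono fun y => ?_
          simp only [hφkdef, indicator_apply, mem_ball_zero_iff]
          by_cases h : ‖y‖ < (m:ℝ) <;> simp [h]
      _ = (m:ℝ≥0∞) * volume (ball (0:En) (m:ℝ)) := lintegral_indicator_const measurableSet_ball _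
  have htotG : ∀ m, (∫⁻ x, Gk m x) ≤ B m := by
    intro m
    calc (∫⁻ x, Gk m x) ≤ ∫⁻ x, (ball (0:En) (m:ℝ)).indicator (fun _ => (m:ℝ≥0∞)) x := by
          refine lintegral_mono fun x => ?_
          simp only [hGkdef, indicator_apply, mem_ball_zero_iff]
          by_cases h : ‖x‖ < (m:ℝ) <;> simp [h]
      _ = (m:ℝ≥0∞) * volume (ball (0:En) (m:ℝ)) := lintegral_indicator_const measurableSet_ball _
  have hΦk_le_B : ∀ m t, Φk m t ≤ B m := fun m t =>
    (setLIntegral_le_lintegral _ _).trans (htot m)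
  -- per-truncation inequality
  have hper : ∀ m : ℕ, (∫⁻ x, (Φk m ‖x‖) ^ r * Gk m x)
      ≤ (∫⁻ y, φ y * (∫⁻ x in {x : En | ‖y‖ < ‖x‖}, G x) ^ (1/r)) ^ r := by
    intro m
    set νm : Measure En := volume.withDensity (Gk m) with hνmdef
    haveI : IsFiniteMeasure νm := by
      constructor
      rw [hνmdef, withDensity_apply _ MeasurableSet.univ, Measure.restrict_univ]
      exact lt_of_le_of_lt (htotG m) (lt_top_iff_ne_top.mpr (hBne m))
    have hrw : (∫⁻ x, (∫⁻ y in ball (0:En) ‖x‖, φk m y) ^ r ∂νm)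
        = ∫⁻ x, (Φk m ‖x‖) ^ r * Gk m x := by
      rw [hνmdef, lintegral_withDensity_eq_lintegral_mul _ (hGkm m) ((hΦk_meas m).pow_const r)]
      exact lintegral_congr fun x => mul_comm _ _
    have hXm_fin : (∫⁻ x, (Φk m ‖x‖) ^ r * Gk m x) ≠ ⊤ := by
      have h1 : (∫⁻ x, (Φk m ‖x‖) ^ r * Gk m x) ≤ (B m) ^ r * (∫⁻ x, Gk m x) := by
        rw [← lintegral_const_mul' _ _ (ENNReal.rpow_ne_top_of_nonneg hr0.le (hBne m))]
        exact lintegral_mono fun x =>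
          mul_le_mul' (ENNReal.rpow_le_rpow (hΦk_le_B m ‖x‖) hr0.le) le_rfl
      refine ne_top_of_le_ne_top ?_ (h1.trans (mul_le_mul' le_rfl (htotG m)))
      exact (ENNReal.mul_lt_top
        (ENNReal.rpow_lt_top_of_nonneg hr0.le (hBne m)) (lt_top_iff_ne_top.mpr (hBne m))).ne
    have hmf := minkowski_fin νm (φk m) (hφkm m) hr (by rwa [hrw])
    rw [hrw] at hmf
    have hRHS : (∫⁻ y, φk m y * (νm {x : En | ‖y‖ < ‖x‖}) ^ (1/r))
        ≤ ∫⁻ y, φ y * (∫⁻ x in {x : En | ‖y‖ < ‖x‖}, G x) ^ (1/r) := by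
      refine lintegral_mono fun y => ?_
      refine mul_le_mul' (hφk_le m y) (ENNReal.rpow_le_rpow ?_ (by positivity))
      rw [hνmdef, withDensity_apply _ (hsety y)]
      exact lintegral_mono fun x => hGk_le m x
    have h2 := hmf.trans hRHS
    calc (∫⁻ x, (Φk m ‖x‖) ^ r * Gk m x)
        = (((∫⁻ x, (Φk m ‖x‖) ^ r * Gk m x)) ^ (1/r)) ^ r := by
          rw [← ENNReal.rpow_mul, one_div_mul_cancel hr0.ne', ENNReal.rpow_one]
      _ ≤ _ := ENNReal.rpow_le_rpow h2 hr0.le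
  -- monotone convergence
  have hsup_int : (∫⁻ x, (∫⁻ y in ball (0:En) ‖x‖, φ y) ^ r * G x)
      = ⨆ m, ∫⁻ x, (Φk m ‖x‖) ^ r * Gk m x := by
    rw [← lintegral_iSup (f := fun m x => (Φk m ‖x‖) ^ r * Gk m x)
      (fun m => ((hΦk_meas m).pow_const r).mul (hGkm m))
      (fun i j hij x => mul_le_mul'
        (ENNReal.rpow_le_rpow (hΦk_mono_m ‖x‖ hij) hr0.le) (hGk_mono x hij))]
    refine lintegral_congr fun x => ?_
    rw [← hΦsup ‖x‖, ← hsup_Gk x, my_iSup_rpow _ hr0,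
      my_iSup_mul_iSup
        (fun i j hij => ENNReal.rpow_le_rpow (hΦk_mono_m ‖x‖ hij) hr0.le)
        (hGk_mono x)]
  rw [hsup_int]
  have hfinal : (⨆ m, ∫⁻ x, (Φk m ‖x‖) ^ r * Gk m x)
      ≤ (∫⁻ y, φ y * (∫⁻ x in {x : En | ‖y‖ < ‖x‖}, G x) ^ (1/r)) ^ r :=
    iSup_le hper
  calc (⨆ m, ∫⁻ x, (Φk m ‖x‖) ^ r * Gk m x) ^ (1/r)
      ≤ ((∫⁻ y, φ y * (∫⁻ x in {x : En | ‖y‖ < ‖x‖}, G x) ^ (1/r)) ^ r) ^ (1/r) :=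
        ENNReal.rpow_le_rpow hfinal (by positivity)
    _ = _ := by rw [← ENNReal.rpow_mul, mul_one_div, div_self hr0.ne', ENNReal.rpow_one]

end

lemma lemB {En : Type*} [NormedAddCommGroup En] [MeasureSpace En] [BorelSpace En]
    [SigmaFinite (volume : Measure En)]
    (hsph : ∀ r : ℝ, volume (sphere (0:En) r) = 0)
    (h0n : volume ({(0:En)} : Set En) = 0)
    (u : En → ℝ≥0∞) (hu : Measurable u)
    (V : ℝ → ℝ≥0∞) (hVdef : ∀ s, V s = ∫⁻ z in ball (0:En) s, u z)
    (hVpos : ∀ s : ℝ, 0 < s → V s ≠ 0)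
    {α : ℝ} (hα0 : 0 < α) (hα1 : α < 1) (t : ℝ) :
    (∫⁻ y in ball (0:En) t, u y * (V ‖y‖) ^ (-α))
      ≤ ENNReal.ofReal ((1-α)⁻¹) * (V t) ^ (1-α) := by
  classical
  have h1α : (0:ℝ) < 1 - α := by linarith
  have hVmono : Monotone V := by
    intro a b hab
    rw [hVdef a, hVdef b]
    exact lintegral_mono' (Measure.restrict_mono (ball_subset_ball hab) le_rfl) le_rfl
  have hVmeas : Measurable V := hVmono.measurable
  set μ : Measure En := volume.withDensity u with hμdef
  have hμball : ∀ s : ℝ, μ (ball (0:En) s) = V s := by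
    intro s
    rw [hVdef s, hμdef, withDensity_apply u measurableSet_ball]
  have hμs : ∀ s : ℝ≥0∞, μ {y : En | V ‖y‖ < s} ≤ s := by
    intro s
    have h := meas_sublevel_le μ
      (fun r => (withDensity_absolutelyContinuous volume u) (hsph r)) s
    simp only [hμball] at h
    exact h
  rcases eq_or_ne (V t) ⊤ with hVt | hVt
  · rw [hVt, ENNReal.top_rpow_of_pos h1α, ENNReal.mul_top
      (ENNReal.ofReal_pos.mpr (inv_pos.mpr h1α)).ne']
    exact le_top
  rcases eq_or_ne (V t) 0 with hV0 | hV0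
  · have h1 : ∀ᵐ y ∂(volume.restrict (ball (0:En) t)), u y = 0 := by
      rw [hVdef t] at hV0
      exact (lintegral_eq_zero_iff hu).mp hV0
    have h2 : (∫⁻ y in ball (0:En) t, u y * (V ‖y‖) ^ (-α)) = 0 := by
      rw [← lintegral_zero (μ := volume.restrict (ball (0:En) t))]
      refine lintegral_congr_ae ?_
      filter_upwards [h1] with y hy
      rw [hy, zero_mul]
    rw [h2]
    exact zero_le
  -- main case : 0 < V t < ⊤
  set c₀ : ℝ := (V t).toReal with hc₀def
  have hc₀ : 0 < c₀ := ENNReal.toReal_pos hV0 hVt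
  have hVteq : V t = ENNReal.ofReal c₀ := (ENNReal.ofReal_toReal hVt).symm
  -- the kernel on En × ℝ
  set F : En → ℝ → ℝ≥0∞ := fun y s =>
    if V ‖y‖ < ENNReal.ofReal s then u y * ENNReal.ofReal (s ^ (-α - 1)) else 0 with hFdef
  have hsmeas : Measurable fun s : ℝ => ENNReal.ofReal (s ^ (-α - 1)) :=
    ENNReal.measurable_ofReal.comp (measurable_id.pow_const _)
  have hFmeas : Measurable (uncurry F) := by
    refine Measurable.ite ?_ ?_ measurable_const
    · exact measurableSet_lt ((hVmeas.comp measurable_norm).comp measurable_fst)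
        (ENNReal.measurable_ofReal.comp measurable_snd)
    · exact (hu.comp measurable_fst).mul (hsmeas.comp measurable_snd)
  -- pointwise identity a.e.
  have hae0 : ∀ᵐ y ∂(volume.restrict (ball (0:En) t)), y ≠ 0 := by
    refine ae_restrict_of_ae ?_
    rw [ae_iff]
    simpa using h0n
  have hptwise : ∀ᵐ y ∂(volume.restrict (ball (0:En) t)),
      u y * (V ‖y‖) ^ (-α) = ENNReal.ofReal α * ∫⁻ s in Ioi (0:ℝ), F y s := by
    filter_upwards [hae0] with y hy
    have hVy : V ‖y‖ ≠ 0 := hVpos _ (norm_pos_iff.mpr hy)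
    rw [rpow_neg_eq_lintegral hα0 hα1 hVy]
    rw [← mul_assoc, mul_comm (u y) (ENNReal.ofReal α), mul_assoc]
    congr 1
    have hind : Measurable fun s : ℝ =>
        ({s : ℝ | V ‖y‖ < ENNReal.ofReal s}).indicator
          (fun s => ENNReal.ofReal (s ^ (-α - 1))) s :=
      hsmeas.indicator (measurableSet_lt measurable_const ENNReal.measurable_ofReal)
    rw [← lintegral_const_mul (u y) hind]
    refine setLIntegral_congr_fun measurableSet_Ioi (fun s _ => ?_)
    by_cases h : V ‖y‖ < ENNReal.ofReal s
    · simp [hFdef, h, indicator_apply]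
    · simp [hFdef, h, indicator_apply]
  have step1 : (∫⁻ y in ball (0:En) t, u y * (V ‖y‖) ^ (-α))
      = ENNReal.ofReal α * ∫⁻ y in ball (0:En) t, ∫⁻ s in Ioi (0:ℝ), F y s := by
    rw [lintegral_congr_ae hptwise]
    rw [lintegral_const_mul' _ _ ENNReal.ofReal_ne_top]
  have step2 : (∫⁻ y in ball (0:En) t, ∫⁻ s in Ioi (0:ℝ), F y s)
      = ∫⁻ s in Ioi (0:ℝ), ∫⁻ y in ball (0:En) t, F y s := by
    exact lintegral_lintegral_swap hFmeas.aemeasurable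
  -- inner bound
  have hEs : ∀ s : ℝ, MeasurableSet {y : En | V ‖y‖ < ENNReal.ofReal s} :=
    fun s => measurableSet_lt (hVmeas.comp measurable_norm) measurable_const
  have inner_bd : ∀ s : ℝ, (∫⁻ y in ball (0:En) t, F y s)
      ≤ ENNReal.ofReal (s ^ (-α - 1)) * min (V t) (ENNReal.ofReal s) := by
    intro s
    have hrw : ∀ y : En, F y s
        = ({y : En | V ‖y‖ < ENNReal.ofReal s}).indicator
            (fun y => u y * ENNReal.ofReal (s ^ (-α - 1))) y := by
      intro y
      by_cases h : V ‖y‖ < ENNReal.ofReal s <;> simp [hFdef, h, indicator_apply]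
    calc (∫⁻ y in ball (0:En) t, F y s)
        = ∫⁻ y in {y : En | V ‖y‖ < ENNReal.ofReal s} ∩ ball (0:En) t,
            u y * ENNReal.ofReal (s ^ (-α - 1)) := by
          rw [lintegral_congr hrw, lintegral_indicator (hEs s),
            Measure.restrict_restrict (hEs s)]
      _ = (∫⁻ y in {y : En | V ‖y‖ < ENNReal.ofReal s} ∩ ball (0:En) t, u y)
            * ENNReal.ofReal (s ^ (-α - 1)) := by
          rw [lintegral_mul_const' _ _ ENNReal.ofReal_ne_top]
      _ ≤ min (V t) (ENNReal.ofReal s) * ENNReal.ofReal (s ^ (-α - 1)) := by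
          refine mul_le_mul_left (le_min ?_ ?_) _
          · rw [hVdef t]
            exact lintegral_mono' (Measure.restrict_mono inter_subset_right le_rfl) le_rfl
          · have h1 : (∫⁻ y in {y : En | V ‖y‖ < ENNReal.ofReal s} ∩ ball (0:En) t, u y)
                ≤ μ {y : En | V ‖y‖ < ENNReal.ofReal s} := by
              rw [hμdef, withDensity_apply u (hEs s)]
              exact lintegral_mono' (Measure.restrict_mono inter_subset_left le_rfl) le_rfl
            exact h1.trans (hμs _)
      _ = ENNReal.ofReal (s ^ (-α - 1)) * min (V t) (ENNReal.ofReal s) := mul_comm _ _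
  -- compute the s-integral bound
  have outer_bd : (∫⁻ s in Ioi (0:ℝ), ENNReal.ofReal (s ^ (-α - 1)) * min (V t) (ENNReal.ofReal s))
      ≤ ENNReal.ofReal (c₀ ^ (1-α) / (1-α)) + ENNReal.ofReal (c₀ ^ (-α) / α) * V t := by
    rw [← Ioc_union_Ioi_eq_Ioi hc₀.le]
    rw [lintegral_union measurableSet_Ioi (Ioc_disjoint_Ioi le_rfl)]
    gcongr
    · -- Ioc part
      have h1 : (∫⁻ s in Ioc (0:ℝ) c₀, ENNReal.ofReal (s ^ (-α - 1)) * min (V t) (ENNReal.ofReal s))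
          ≤ ∫⁻ s in Ioc (0:ℝ) c₀, ENNReal.ofReal (s ^ (-α)) := by
        refine lintegral_mono_ae ?_
        filter_upwards [ae_restrict_mem measurableSet_Ioc] with s hs
        have hs0 : 0 < s := hs.1
        calc ENNReal.ofReal (s ^ (-α - 1)) * min (V t) (ENNReal.ofReal s)
            ≤ ENNReal.ofReal (s ^ (-α - 1)) * ENNReal.ofReal s :=
              mul_le_mul_right (min_le_right _ _) _
          _ = ENNReal.ofReal (s ^ (-α)) := by
              rw [← ENNReal.ofReal_mul (Real.rpow_nonneg hs0.le _)]
              congr 1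
              have h3 := Real.rpow_add_one hs0.ne' (-α - 1)
              rw [show -α - 1 + 1 = -α by ring] at h3
              exact h3.symm
      refine h1.trans ?_
      rw [lint_Ioc_rpow (by linarith) hc₀]
      rw [show -α + 1 = 1 - α by ring]
    · -- Ioi part
      have h2 : (∫⁻ s in Ioi c₀, ENNReal.ofReal (s ^ (-α - 1)) * min (V t) (ENNReal.ofReal s))
          ≤ ∫⁻ s in Ioi c₀, ENNReal.ofReal (s ^ (-α - 1)) * V t :=
        lintegral_mono fun s => mul_le_mul_right (min_le_left _ _) _
      refine h2.trans ?_
      rw [lintegral_mul_const' _ _ hVt]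
      rw [lint_Ioi_rpow (by linarith) hc₀]
      refine le_of_eq ?_
      congr 1
      rw [show -α - 1 + 1 = -α by ring]
      rw [neg_div_neg_eq]
  -- combine
  calc (∫⁻ y in ball (0:En) t, u y * (V ‖y‖) ^ (-α))
      = ENNReal.ofReal α * ∫⁻ s in Ioi (0:ℝ), ∫⁻ y in ball (0:En) t, F y s := by
        rw [step1, step2]
    _ ≤ ENNReal.ofReal α *
        ∫⁻ s in Ioi (0:ℝ), ENNReal.ofReal (s ^ (-α - 1)) * min (V t) (ENNReal.ofReal s) := by
        exact mul_le_mul_right (lintegral_mono inner_bd) _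
    _ ≤ ENNReal.ofReal α *
        (ENNReal.ofReal (c₀ ^ (1-α) / (1-α)) + ENNReal.ofReal (c₀ ^ (-α) / α) * V t) :=
        mul_le_mul_right outer_bd _
    _ = ENNReal.ofReal ((1-α)⁻¹) * (V t) ^ (1-α) := by
        have hαne : α ≠ 0 := hα0.ne'
        have h1αne : (1:ℝ) - α ≠ 0 := h1α.ne'
        rw [hVteq, ENNReal.ofReal_rpow_of_pos hc₀,
          ← ENNReal.ofReal_mul (by positivity : (0:ℝ) ≤ c₀ ^ (-α) / α),
          ← ENNReal.ofReal_add (by positivity) (by positivity),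
          ← ENNReal.ofReal_mul hα0.le,
          ← ENNReal.ofReal_mul (by positivity : (0:ℝ) ≤ (1-α)⁻¹)]
        congr 1
        have e1 : c₀ ^ (-α) * c₀ = c₀ ^ (1-α) := by
          rw [show (1:ℝ) - α = -α + 1 by ring, Real.rpow_add_one hc₀.ne']
        rw [div_mul_eq_mul_div, e1]
        field_simp
        ring

/-- Sufficiency half, with explicit constant `(1-α)^{-1/p'} A(α)`, of the two-weight
criterion for the multidimensional Hardy operator (constant-exponent case of
Theorem 2 of the paper). -/
theorem hardy_two_weight_sufficiency
    (n : ℕ) (hn : 1 ≤ n) (p q p' : ℝ) (hp : 1 < p) (hpq : p ≤ q)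
    (hp' : p' = p / (p - 1))
    (v w : EuclideanSpace ℝ (Fin n) → ℝ)
    (hv : Measurable v) (hv0 : ∀ x, 0 ≤ v x) (hvpos : ∀ᵐ x, 0 < v x)
    (hw : Measurable w) (hw0 : ∀ x, 0 ≤ w x) (hwpos : ∀ᵐ x, 0 < w x)
    (α : ℝ) (hα : α ∈ Set.Ioo (0 : ℝ) 1)
    (hA : (⨆ t ∈ Set.Ioi (0 : ℝ),
        (∫⁻ y in ball (0 : EuclideanSpace ℝ (Fin n)) t,
            ENNReal.ofReal (v y) ^ (-p')) ^ (α / p') *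
        (∫⁻ x in {x : EuclideanSpace ℝ (Fin n) | t < ‖x‖},
            ((∫⁻ y in ball (0 : EuclideanSpace ℝ (Fin n)) ‖x‖,
                ENNReal.ofReal (v y) ^ (-p')) ^ ((1 - α) / p') *
              ENNReal.ofReal (w x)) ^ q) ^ (1 / q)) < ⊤) :
    ∀ f : EuclideanSpace ℝ (Fin n) → ℝ, Measurable f → (∀ x, 0 ≤ f x) →
      (∫⁻ x, ((∫⁻ y in ball (0 : EuclideanSpace ℝ (Fin n)) ‖x‖,
            ENNReal.ofReal (f y)) * ENNReal.ofReal (w x)) ^ q) ^ (1 / q)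
        ≤ ENNReal.ofReal ((1 - α) ^ (-(1 / p'))) *
          (⨆ t ∈ Set.Ioi (0 : ℝ),
            (∫⁻ y in ball (0 : EuclideanSpace ℝ (Fin n)) t,
                ENNReal.ofReal (v y) ^ (-p')) ^ (α / p') *
            (∫⁻ x in {x : EuclideanSpace ℝ (Fin n) | t < ‖x‖},
                ((∫⁻ y in ball (0 : EuclideanSpace ℝ (Fin n)) ‖x‖,
                    ENNReal.ofReal (v y) ^ (-p')) ^ ((1 - α) / p') *
                  ENNReal.ofReal (w x)) ^ q) ^ (1 / q)) *
          (∫⁻ x, ENNReal.ofReal (f x * v x) ^ p) ^ (1 / p) := by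
  intro f hf hf0
  obtain ⟨hα0, hα1⟩ := hα
  have h1α : (0:ℝ) < 1 - α := by linarith
  have hp0 : (0:ℝ) < p := by linarith
  have hp10 : (0:ℝ) < p - 1 := by linarith
  have hp'1 : 1 < p' := by
    rw [hp', lt_div_iff₀ hp10]; linarith
  have hp'0 : (0:ℝ) < p' := by linarith
  have hq1 : 1 < q := lt_of_lt_of_le hp hpq
  have hq0 : (0:ℝ) < q := by linarith
  have hqp0 : (0:ℝ) < q / p := by positivity
  have hr1 : (1:ℝ) ≤ q / p := (one_le_div hp0).mpr hpq
  have hconj : Real.HolderConjugate p p' := by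
    rw [hp', Real.holderConjugate_iff]
    constructor
    · exact hp
    · have h2 : p ≠ 0 := hp0.ne'
      field_simp
      ring
  haveI : Nonempty (Fin n) := ⟨⟨0, hn⟩⟩
  have hsph : ∀ r : ℝ, volume (sphere (0:EuclideanSpace ℝ (Fin n)) r) = 0 :=
    fun r => Measure.addHaar_sphere volume 0 r
  have h0n : volume ({(0:EuclideanSpace ℝ (Fin n))} : Set (EuclideanSpace ℝ (Fin n))) = 0 := by
    have := hsph 0
    rwa [Metric.sphere_zero] at this
  have hball_ne : ∀ R : ℝ, volume (ball (0:EuclideanSpace ℝ (Fin n)) R) ≠ ⊤ :=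
    fun R => measure_ball_lt_top.ne
  have hae_ne0 : ∀ᵐ y : EuclideanSpace ℝ (Fin n), y ≠ 0 := by
    have hs : {y : EuclideanSpace ℝ (Fin n) | ¬ y ≠ 0} = {0} := by ext z; simp
    rw [ae_iff, hs]; exact h0n
  -- the weight function u and its primitive V
  set u : EuclideanSpace ℝ (Fin n) → ℝ≥0∞ := fun y => ENNReal.ofReal (v y) ^ (-p') with hudef
  have hu : Measurable u := (ENNReal.measurable_ofReal.comp hv).pow_const _
  set V : ℝ → ℝ≥0∞ :=
    fun s => ∫⁻ z in ball (0:EuclideanSpace ℝ (Fin n)) s, u z with hVset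
  have hVdef : ∀ s : ℝ, V s = ∫⁻ z in ball (0:EuclideanSpace ℝ (Fin n)) s, u z :=
    fun s => by rw [hVset]
  have hVmono : Monotone V := by
    intro a b hab
    rw [hVdef a, hVdef b]
    exact lintegral_mono' (Measure.restrict_mono (ball_subset_ball hab) le_rfl) le_rfl
  have hVmeas : Measurable V := hVmono.measurable
  have hVpos : ∀ s : ℝ, 0 < s → V s ≠ 0 := by
    intro s hs h0
    rw [hVdef s] at h0
    have h1 : ∀ᵐ y ∂(volume.restrict (ball (0:EuclideanSpace ℝ (Fin n)) s)), u y = 0 :=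
      (lintegral_eq_zero_iff hu).mp h0
    have h2 : ∀ᵐ y ∂(volume.restrict (ball (0:EuclideanSpace ℝ (Fin n)) s)), (0:ℝ) < v y :=
      ae_restrict_of_ae hvpos
    have h3 : ∀ᵐ _y ∂(volume.restrict (ball (0:EuclideanSpace ℝ (Fin n)) s)), False := by
      filter_upwards [h1, h2] with y e1 e2
      rw [hudef] at e1
      exact absurd e1
        (ENNReal.rpow_pos (ENNReal.ofReal_pos.mpr e2) ENNReal.ofReal_ne_top).ne'
    have h4 : (volume.restrict (ball (0:EuclideanSpace ℝ (Fin n)) s))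
        {_y : EuclideanSpace ℝ (Fin n) | True} = 0 := by
      have := ae_iff.mp h3
      simpa using this
    have h5 : volume (ball (0:EuclideanSpace ℝ (Fin n)) s) = 0 := by
      have h6 : ({_y : EuclideanSpace ℝ (Fin n) | True} : Set (EuclideanSpace ℝ (Fin n)))
          = univ := by ext z; simp
      rw [h6, Measure.restrict_apply_univ] at h4
      exact h4
    exact absurd h5 (measure_ball_pos volume 0 hs).ne'
  -- abbreviations appearing in the statement
  set C : ℝ≥0∞ := ENNReal.ofReal ((1 - α) ^ (-(1 / p'))) with hCdef
  have hCne0 : C ≠ 0 := by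
    rw [hCdef]
    exact (ENNReal.ofReal_pos.mpr (Real.rpow_pos_of_pos h1α _)).ne'
  have hCnetop : C ≠ ⊤ := by rw [hCdef]; exact ENNReal.ofReal_ne_top
  set Gq : EuclideanSpace ℝ (Fin n) → ℝ≥0∞ :=
    fun x => ((V ‖x‖) ^ ((1 - α) / p') * ENNReal.ofReal (w x)) ^ q with hGqset
  have hGqdef : ∀ x, Gq x = ((V ‖x‖) ^ ((1 - α) / p') * ENNReal.ofReal (w x)) ^ q :=
    fun x => by rw [hGqset]
  have hGqm : Measurable Gq := by
    rw [hGqset]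
    exact (((hVmeas.comp measurable_norm).pow_const _).mul
      (ENNReal.measurable_ofReal.comp hw)).pow_const _
  set φh : EuclideanSpace ℝ (Fin n) → ℝ≥0∞ :=
    fun y => (ENNReal.ofReal (f y * v y)) ^ p * ((V ‖y‖) ^ (α / p')) ^ p with hφset
  have hφdef : ∀ y, φh y = (ENNReal.ofReal (f y * v y)) ^ p * ((V ‖y‖) ^ (α / p')) ^ p :=
    fun y => by rw [hφset]
  have hφm : Measurable φh := by
    rw [hφset]
    exact ((ENNReal.measurable_ofReal.comp (hf.mul hv)).pow_const _).mul
      (((hVmeas.comp measurable_norm).pow_const _).pow_const _)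
  set Np : ℝ≥0∞ := ∫⁻ x, ENNReal.ofReal (f x * v x) ^ p with hNpdef
  set Asup : ℝ≥0∞ := ⨆ t ∈ Set.Ioi (0 : ℝ),
      (∫⁻ y in ball (0 : EuclideanSpace ℝ (Fin n)) t,
          ENNReal.ofReal (v y) ^ (-p')) ^ (α / p') *
      (∫⁻ x in {x : EuclideanSpace ℝ (Fin n) | t < ‖x‖},
          ((∫⁻ y in ball (0 : EuclideanSpace ℝ (Fin n)) ‖x‖,
              ENNReal.ofReal (v y) ^ (-p')) ^ ((1 - α) / p') *
            ENNReal.ofReal (w x)) ^ q) ^ (1 / q) with hAsupdef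
  have hAne : Asup ≠ ⊤ := hA.ne
  -- the per-t bound coming from the supremum
  have hAt : ∀ t : ℝ, 0 < t →
      (V t) ^ (α / p') *
        (∫⁻ x in {x : EuclideanSpace ℝ (Fin n) | t < ‖x‖}, Gq x) ^ (1 / q) ≤ Asup := by
    intro t ht
    rw [hAsupdef]
    have h := le_biSup (f := fun t : ℝ =>
      (∫⁻ y in ball (0 : EuclideanSpace ℝ (Fin n)) t,
          ENNReal.ofReal (v y) ^ (-p')) ^ (α / p') *
      (∫⁻ x in {x : EuclideanSpace ℝ (Fin n) | t < ‖x‖},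
          ((∫⁻ y in ball (0 : EuclideanSpace ℝ (Fin n)) ‖x‖,
              ENNReal.ofReal (v y) ^ (-p')) ^ ((1 - α) / p') *
            ENNReal.ofReal (w x)) ^ q) ^ (1 / q)) (mem_Ioi.mpr ht)
    exact h
  have hAp : ∀ t : ℝ, 0 < t →
      ((V t) ^ (α / p')) ^ p *
        (∫⁻ x in {x : EuclideanSpace ℝ (Fin n) | t < ‖x‖}, Gq x) ^ (1 / (q / p))
      ≤ Asup ^ p := by
    intro t ht
    have h := ENNReal.rpow_le_rpow (hAt t ht) hp0.le
    rw [ENNReal.mul_rpow_of_nonneg _ _ hp0.le] at h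
    rw [← ENNReal.rpow_mul
      (∫⁻ x in {x : EuclideanSpace ℝ (Fin n) | t < ‖x‖}, Gq x) (1/q) p] at h
    rwa [show (1:ℝ)/q * p = 1/(q/p) by
      rw [one_div_div]; ring] at h
  -- Lemma B specialised
  have hB : ∀ t : ℝ,
      (∫⁻ y in ball (0:EuclideanSpace ℝ (Fin n)) t, u y * (V ‖y‖) ^ (-α))
        ≤ ENNReal.ofReal ((1 - α)⁻¹) * (V t) ^ (1 - α) :=
    fun t => lemB hsph h0n u hu V hVdef hVpos hα0 hα1 t
  -- pointwise claim
  have hclaim : ∀ x : EuclideanSpace ℝ (Fin n),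
      (∫⁻ y in ball (0:EuclideanSpace ℝ (Fin n)) ‖x‖, ENNReal.ofReal (f y))
        ≤ C * (V ‖x‖) ^ ((1 - α) / p') *
            (∫⁻ y in ball (0:EuclideanSpace ℝ (Fin n)) ‖x‖, φh y) ^ (1 / p) := by
    intro x
    by_cases hVtop : V ‖x‖ = ⊤
    · by_cases hΦ0 : (∫⁻ y in ball (0:EuclideanSpace ℝ (Fin n)) ‖x‖, φh y) = 0
      · have hz : ∀ᵐ y ∂(volume.restrict (ball (0:EuclideanSpace ℝ (Fin n)) ‖x‖)),
            φh y = 0 := (lintegral_eq_zero_iff hφm).mp hΦ0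
        have hLHS0 : (∫⁻ y in ball (0:EuclideanSpace ℝ (Fin n)) ‖x‖,
            ENNReal.ofReal (f y)) = 0 := by
          rw [← lintegral_zero
            (μ := volume.restrict (ball (0:EuclideanSpace ℝ (Fin n)) ‖x‖))]
          refine lintegral_congr_ae ?_
          filter_upwards [hz, ae_restrict_of_ae hvpos, ae_restrict_of_ae hae_ne0]
            with y h1 h2 h3
          rw [hφdef y] at h1
          rcases mul_eq_zero.mp h1 with h4 | h4
          · rcases ENNReal.rpow_eq_zero_iff.mp h4 with ⟨h5, _⟩ | ⟨h5, _⟩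
            · have h7 : f y * v y ≤ 0 := ENNReal.ofReal_eq_zero.mp h5
              have h8 : f y = 0 := by
                rcases lt_or_eq_of_le (hf0 y) with h9 | h9
                · nlinarith
                · exact h9.symm
              simp [h8]
            · exact absurd h5 ENNReal.ofReal_ne_top
          · exfalso
            have hVy := hVpos ‖y‖ (norm_pos_iff.mpr h3)
            rcases ENNReal.rpow_eq_zero_iff.mp h4 with ⟨h5, _⟩ | ⟨_, h5⟩
            · rcases ENNReal.rpow_eq_zero_iff.mp h5 with ⟨h6, _⟩ | ⟨_, h6⟩
              · exact hVy h6
              · have : (0:ℝ) < α / p' := by positivity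
                linarith
            · linarith
        rw [hLHS0]
        exact zero_le
      · have hb : ((∫⁻ y in ball (0:EuclideanSpace ℝ (Fin n)) ‖x‖, φh y)) ^ (1/p) ≠ 0 := by
          intro h
          rcases ENNReal.rpow_eq_zero_iff.mp h with ⟨h1, _⟩ | ⟨_, h2⟩
          · exact hΦ0 h1
          · have : (0:ℝ) < 1/p := by positivity
            linarith
        have hRtop : C * (V ‖x‖) ^ ((1 - α) / p') *
            (∫⁻ y in ball (0:EuclideanSpace ℝ (Fin n)) ‖x‖, φh y) ^ (1 / p) = ⊤ := by
          rw [hVtop, ENNReal.top_rpow_of_pos (by positivity)]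
          rw [ENNReal.mul_top hCne0, ENNReal.top_mul hb]
        rw [hRtop]
        exact le_top
    · -- Hölder case
      set g1 : EuclideanSpace ℝ (Fin n) → ℝ≥0∞ :=
        fun y => ENNReal.ofReal (f y * v y) * (V ‖y‖) ^ (α / p') with hg1def
      set g2 : EuclideanSpace ℝ (Fin n) → ℝ≥0∞ :=
        fun y => (ENNReal.ofReal (v y))⁻¹ * (V ‖y‖) ^ (-(α / p')) with hg2def
      have hg1m : Measurable g1 := by
        rw [hg1def]
        exact (ENNReal.measurable_ofReal.comp (hf.mul hv)).mul
          ((hVmeas.comp measurable_norm).pow_const _)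
      have hg2m : Measurable g2 := by
        rw [hg2def]
        exact (ENNReal.measurable_ofReal.comp hv).inv.mul
          ((hVmeas.comp measurable_norm).pow_const _)
      have haeq : ∀ᵐ y ∂(volume.restrict (ball (0:EuclideanSpace ℝ (Fin n)) ‖x‖)),
          ENNReal.ofReal (f y) = g1 y * g2 y := by
        filter_upwards [ae_restrict_of_ae hvpos, ae_restrict_of_ae hae_ne0,
          ae_restrict_mem measurableSet_ball] with y h1 h2 h3
        have hVy0 : V ‖y‖ ≠ 0 := hVpos _ (norm_pos_iff.mpr h2)
        have hVyt : V ‖y‖ ≠ ⊤ :=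
          ne_top_of_le_ne_top hVtop (hVmono (le_of_lt (mem_ball_zero_iff.mp h3)))
        rw [hg1def, hg2def]
        simp only
        rw [ENNReal.ofReal_mul (hf0 y)]
        have e1 : ENNReal.ofReal (v y) * (ENNReal.ofReal (v y))⁻¹ = 1 :=
          ENNReal.mul_inv_cancel (ENNReal.ofReal_pos.mpr h1).ne' ENNReal.ofReal_ne_top
        have e2 : (V ‖y‖) ^ (α / p') * (V ‖y‖) ^ (-(α / p')) = 1 := by
          rw [← ENNReal.rpow_add _ _ hVy0 hVyt]
          simp
        calc ENNReal.ofReal (f y)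
            = ENNReal.ofReal (f y) *
                (ENNReal.ofReal (v y) * (ENNReal.ofReal (v y))⁻¹) *
                ((V ‖y‖) ^ (α / p') * (V ‖y‖) ^ (-(α / p'))) := by
              rw [e1, e2, mul_one, mul_one]
          _ = ENNReal.ofReal (f y) * ENNReal.ofReal (v y) * (V ‖y‖) ^ (α / p') *
                ((ENNReal.ofReal (v y))⁻¹ * (V ‖y‖) ^ (-(α / p'))) := by ring
      have hg1int : (∫⁻ y in ball (0:EuclideanSpace ℝ (Fin n)) ‖x‖, g1 y ^ p)
          = ∫⁻ y in ball (0:EuclideanSpace ℝ (Fin n)) ‖x‖, φh y := by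
        refine lintegral_congr fun y => ?_
        rw [hg1def, hφdef y]
        simp only
        rw [ENNReal.mul_rpow_of_nonneg _ _ hp0.le]
      have hg2int : (∫⁻ y in ball (0:EuclideanSpace ℝ (Fin n)) ‖x‖, g2 y ^ p')
          ≤ ENNReal.ofReal ((1 - α)⁻¹) * (V ‖x‖) ^ (1 - α) := by
        have hptw : ∀ y : EuclideanSpace ℝ (Fin n),
            g2 y ^ p' = u y * (V ‖y‖) ^ (-α) := by
          intro y
          rw [hg2def, hudef]
          simp only
          rw [ENNReal.mul_rpow_of_nonneg _ _ hp'0.le]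
          congr 1
          · rw [← ENNReal.rpow_neg_one (ENNReal.ofReal (v y)), ← ENNReal.rpow_mul]
            congr 1
            ring
          · rw [← ENNReal.rpow_mul]
            congr 1
            field_simp
        rw [lintegral_congr hptw]
        exact hB ‖x‖
      calc (∫⁻ y in ball (0:EuclideanSpace ℝ (Fin n)) ‖x‖, ENNReal.ofReal (f y))
          = ∫⁻ y in ball (0:EuclideanSpace ℝ (Fin n)) ‖x‖, g1 y * g2 y :=
            lintegral_congr_ae haeq
        _ ≤ (∫⁻ y in ball (0:EuclideanSpace ℝ (Fin n)) ‖x‖, g1 y ^ p) ^ (1/p) *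
              (∫⁻ y in ball (0:EuclideanSpace ℝ (Fin n)) ‖x‖, g2 y ^ p') ^ (1/p') := by
            have h := ENNReal.lintegral_mul_le_Lp_mul_Lq
              (volume.restrict (ball (0:EuclideanSpace ℝ (Fin n)) ‖x‖)) hconj
              hg1m.aemeasurable hg2m.aemeasurable
            simpa [Pi.mul_apply] using h
        _ ≤ (∫⁻ y in ball (0:EuclideanSpace ℝ (Fin n)) ‖x‖, φh y) ^ (1/p) *
              (ENNReal.ofReal ((1 - α)⁻¹) * (V ‖x‖) ^ (1 - α)) ^ (1/p') := by
            rw [hg1int]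
            exact mul_le_mul_right (ENNReal.rpow_le_rpow hg2int (by positivity)) _
        _ = C * (V ‖x‖) ^ ((1 - α) / p') *
              (∫⁻ y in ball (0:EuclideanSpace ℝ (Fin n)) ‖x‖, φh y) ^ (1 / p) := by
            rw [ENNReal.mul_rpow_of_nonneg _ _ (by positivity : (0:ℝ) ≤ 1/p')]
            have e3 : (ENNReal.ofReal ((1 - α)⁻¹)) ^ ((1:ℝ)/p') = C := by
              rw [ENNReal.ofReal_rpow_of_pos (inv_pos.mpr h1α), hCdef]
              congr 1
              rw [Real.inv_rpow h1α.le, ← Real.rpow_neg h1α.le]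
            have e4 : ((V ‖x‖) ^ ((1:ℝ) - α)) ^ ((1:ℝ)/p') = (V ‖x‖) ^ ((1 - α)/p') := by
              rw [← ENNReal.rpow_mul]
              congr 1
              rw [mul_one_div]
            rw [e3, e4]
            ring
  -- main estimate
  have hfactor : ∀ x : EuclideanSpace ℝ (Fin n),
      (C * (V ‖x‖) ^ ((1 - α) / p') *
          (∫⁻ y in ball (0:EuclideanSpace ℝ (Fin n)) ‖x‖, φh y) ^ (1 / p) *
        ENNReal.ofReal (w x)) ^ q
      = C ^ q * ((∫⁻ y in ball (0:EuclideanSpace ℝ (Fin n)) ‖x‖, φh y) ^ (q/p) * Gq x) := by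
    intro x
    rw [show C * (V ‖x‖) ^ ((1 - α) / p') *
          (∫⁻ y in ball (0:EuclideanSpace ℝ (Fin n)) ‖x‖, φh y) ^ (1 / p) *
          ENNReal.ofReal (w x)
        = C * ((∫⁻ y in ball (0:EuclideanSpace ℝ (Fin n)) ‖x‖, φh y) ^ (1 / p) *
            ((V ‖x‖) ^ ((1 - α) / p') * ENNReal.ofReal (w x))) from by ring]
    rw [ENNReal.mul_rpow_of_nonneg _ _ hq0.le, ENNReal.mul_rpow_of_nonneg _ _ hq0.le]
    rw [← ENNReal.rpow_mul, show (1:ℝ)/p * q = q/p from by ring]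
  have hmg := minkowski_gen hball_ne Gq φh hGqm hφm hr1
  have hmg2 : (∫⁻ x, (∫⁻ y in ball (0:EuclideanSpace ℝ (Fin n)) ‖x‖, φh y) ^ (q/p) * Gq x)
      ≤ (∫⁻ y, φh y *
          (∫⁻ x in {x : EuclideanSpace ℝ (Fin n) | ‖y‖ < ‖x‖}, Gq x) ^ (1/(q/p))) ^ (q/p) := by
    have h := ENNReal.rpow_le_rpow hmg hqp0.le
    rwa [← ENNReal.rpow_mul, one_div_mul_cancel hqp0.ne', ENNReal.rpow_one] at h
  have hy_bd : (∫⁻ y, φh y *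
        (∫⁻ x in {x : EuclideanSpace ℝ (Fin n) | ‖y‖ < ‖x‖}, Gq x) ^ (1/(q/p)))
      ≤ Asup ^ p * Np := by
    have h1 : (∫⁻ y, φh y *
          (∫⁻ x in {x : EuclideanSpace ℝ (Fin n) | ‖y‖ < ‖x‖}, Gq x) ^ (1/(q/p)))
        ≤ ∫⁻ y, Asup ^ p * ENNReal.ofReal (f y * v y) ^ p := by
      refine lintegral_mono_ae ?_
      filter_upwards [hae_ne0] with y hy
      have hAy := hAp ‖y‖ (norm_pos_iff.mpr hy)
      rw [hφdef y]
      calc ENNReal.ofReal (f y * v y) ^ p * ((V ‖y‖) ^ (α / p')) ^ p *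
            (∫⁻ x in {x : EuclideanSpace ℝ (Fin n) | ‖y‖ < ‖x‖}, Gq x) ^ (1/(q/p))
          = ENNReal.ofReal (f y * v y) ^ p * (((V ‖y‖) ^ (α / p')) ^ p *
              (∫⁻ x in {x : EuclideanSpace ℝ (Fin n) | ‖y‖ < ‖x‖}, Gq x) ^ (1/(q/p))) := by
            ring
        _ ≤ ENNReal.ofReal (f y * v y) ^ p * Asup ^ p := mul_le_mul_right hAy _
        _ = Asup ^ p * ENNReal.ofReal (f y * v y) ^ p := mul_comm _ _
    refine h1.trans ?_
    rw [lintegral_const_mul' _ _ (ENNReal.rpow_ne_top_of_nonneg hp0.le hAne), hNpdef]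
  have hLbound : (∫⁻ x, ((∫⁻ y in ball (0 : EuclideanSpace ℝ (Fin n)) ‖x‖,
        ENNReal.ofReal (f y)) * ENNReal.ofReal (w x)) ^ q)
      ≤ C ^ q * (Asup ^ p * Np) ^ (q/p) := by
    calc (∫⁻ x, ((∫⁻ y in ball (0 : EuclideanSpace ℝ (Fin n)) ‖x‖,
          ENNReal.ofReal (f y)) * ENNReal.ofReal (w x)) ^ q)
        ≤ ∫⁻ x, (C * (V ‖x‖) ^ ((1 - α) / p') *
            (∫⁻ y in ball (0:EuclideanSpace ℝ (Fin n)) ‖x‖, φh y) ^ (1 / p) *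
            ENNReal.ofReal (w x)) ^ q := by
          refine lintegral_mono fun x => ?_
          exact ENNReal.rpow_le_rpow (mul_le_mul_left (hclaim x) _) hq0.le
      _ = ∫⁻ x, C ^ q *
            ((∫⁻ y in ball (0:EuclideanSpace ℝ (Fin n)) ‖x‖, φh y) ^ (q/p) * Gq x) :=
          lintegral_congr hfactor
      _ = C ^ q * ∫⁻ x,
            (∫⁻ y in ball (0:EuclideanSpace ℝ (Fin n)) ‖x‖, φh y) ^ (q/p) * Gq x :=
          lintegral_const_mul' _ _ (ENNReal.rpow_ne_top_of_nonneg hq0.le hCnetop)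
      _ ≤ C ^ q * (∫⁻ y, φh y *
            (∫⁻ x in {x : EuclideanSpace ℝ (Fin n) | ‖y‖ < ‖x‖}, Gq x) ^ (1/(q/p))) ^ (q/p) :=
          mul_le_mul_right hmg2 _
      _ ≤ C ^ q * (Asup ^ p * Np) ^ (q/p) :=
          mul_le_mul_right (ENNReal.rpow_le_rpow hy_bd hqp0.le) _
  -- conclude
  have hfinal : (C ^ q * (Asup ^ p * Np) ^ (q/p)) ^ ((1:ℝ)/q) = C * Asup * Np ^ (1/p) := by
    rw [ENNReal.mul_rpow_of_nonneg _ _ (by positivity : (0:ℝ) ≤ 1/q)]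
    have e1 : (C ^ q) ^ ((1:ℝ)/q) = C := by
      rw [← ENNReal.rpow_mul, mul_one_div, div_self hq0.ne', ENNReal.rpow_one]
    have e2 : ((Asup ^ p * Np) ^ (q/p)) ^ ((1:ℝ)/q) = (Asup ^ p * Np) ^ ((1:ℝ)/p) := by
      rw [← ENNReal.rpow_mul]
      congr 1
      rw [div_mul_div_comm, mul_one, mul_comm p q, ← div_div, div_self hq0.ne']
    have e3 : (Asup ^ p * Np) ^ ((1:ℝ)/p) = Asup * Np ^ (1/p) := by
      rw [ENNReal.mul_rpow_of_nonneg _ _ (by positivity : (0:ℝ) ≤ 1/p)]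
      rw [← ENNReal.rpow_mul, mul_one_div, div_self hp0.ne', ENNReal.rpow_one]
    rw [e1, e2, e3, mul_assoc]
  calc (∫⁻ x, ((∫⁻ y in ball (0 : EuclideanSpace ℝ (Fin n)) ‖x‖,
        ENNReal.ofReal (f y)) * ENNReal.ofReal (w x)) ^ q) ^ ((1:ℝ)/q)
      ≤ (C ^ q * (Asup ^ p * Np) ^ (q/p)) ^ ((1:ℝ)/q) :=
        ENNReal.rpow_le_rpow hLbound (by positivity)
    _ = C * Asup * Np ^ (1/p) := hfinal
end

section
/- Let n ≥ 1 and 0 < p ≤ q < ∞, and let v, w be weights on ℝⁿ with ln(1/v) integrable on every ball. Suppose C > 0 is a constant such that (∫_{ℝⁿ} (Gf(x) · w(x))^q dx)^{1/q} ≤ C · (∫_{ℝⁿ} (f(x) · v(x))^p dx)^{1/p} for every measurable f > 0 with ln f integrable on every ball. Then for every s ∈ (1,∞): e^{s/p} · ( e^s + 1/(s-1) )^{-1/p} · D(s) ≤ C, where D(s) := sup_{t>0} |B(0,t)|^{(s-1)/p} · ( ∫_{|x|>t} [ w(x) · |B(0,|x|)|^{-s/p} · exp( (1/|B(0,|x|)|)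 ∫_{|y|<|x|} ln(1/v(y)) dy ) ]^q dx )^{1/q}. -/
open MeasureTheory ENNReal Metric Set
open scoped NNReal

local notation "dim" => Module.finrank ℝ

lemma I1' {n : ℕ} (hn : 1 ≤ n) (b : ℝ) {t : ℝ} (ht : 0 < t) :
    ∫ y in Ioo (0 : ℝ) t, y ^ (n - 1) * b = b * t ^ n / n := by
  rw [← integral_Ioc_eq_integral_Ioo, ← intervalIntegral.integral_of_le ht.le,
    intervalIntegral.integral_mul_const, integral_pow]
  rw [Nat.sub_add_cancel hn]
  have : (0 : ℝ) ^ n = 0 := zero_pow (by omega)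
  rw [this]
  push_cast [Nat.cast_sub hn]
  ring

lemma I2 {n : ℕ} (hn : 1 ≤ n) {t R : ℝ} (ht : 0 < t) (htR : t ≤ R) :
    ∫ y in Ico t R, (n : ℝ) * y ^ (n - 1) * (Real.log t - Real.log y)
      = (R ^ n * (Real.log t - Real.log R) + R ^ n / n) - (t ^ n * (Real.log t - Real.log t) + t ^ n / n) := by
  set F : ℝ → ℝ := fun y => y ^ n * (Real.log t - Real.log y) + y ^ n / n with hF
  have hderiv : ∀ y ∈ Set.uIcc t R, HasDerivAt F ((n : ℝ) * y ^ (n - 1) * (Real.log t - Real.log y)) y := by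
    intro y hy
    rw [Set.uIcc_of_le htR] at hy
    have hy0 : 0 < y := lt_of_lt_of_le ht hy.1
    have h1 : HasDerivAt (fun y : ℝ => y ^ n) ((n : ℝ) * y ^ (n - 1)) y := hasDerivAt_pow n y
    have h2 : HasDerivAt (fun y : ℝ => Real.log t - Real.log y) (0 - y⁻¹) y :=
      (hasDerivAt_const y (Real.log t)).sub (Real.hasDerivAt_log hy0.ne')
    have h3 : HasDerivAt F (↑n * y ^ (n - 1) * (Real.log t - Real.log y) + y ^ n * (0 - y⁻¹) + ↑n * y ^ (n - 1) / ↑n) y :=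
      (h1.mul h2).add (h1.div_const (n : ℝ))
    convert h3 using 1
    have hyne : y ≠ 0 := hy0.ne'
    have hne : (n : ℝ) ≠ 0 := by positivity
    field_simp
    have hpow : y ^ (n - 1) * y = y ^ n := by rw [← pow_succ, Nat.sub_add_cancel hn]
    rw [hpow]
    ring
  have hint : IntervalIntegrable (fun y => (n : ℝ) * y ^ (n - 1) * (Real.log t - Real.log y)) volume t R := by
    apply ContinuousOn.intervalIntegrable
    apply ContinuousOn.mul (by fun_prop)
    apply ContinuousOn.sub continuousOn_const
    apply Real.continuousOn_log.mono
    intro y hy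
    rw [Set.uIcc_of_le htR] at hy
    simp only [Set.mem_compl_iff, Set.mem_singleton_iff]
    exact (ne_of_gt (lt_of_lt_of_le ht hy.1))
  have := intervalIntegral.integral_eq_sub_of_hasDerivAt hderiv hint
  rw [intervalIntegral.integral_of_le htR, integral_Ioc_eq_integral_Ioo] at this
  rw [MeasureTheory.integral_Ico_eq_integral_Ioo, this]

lemma I3_int {n : ℕ} {t σ : ℝ} (hn : 1 ≤ n) (ht : 0 < t) (hσ : (n : ℝ) < σ) :
    IntegrableOn (fun y : ℝ => y ^ (n - 1) * (t / y) ^ σ) (Ioi t) := by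
  have key : ∀ y ∈ Ioi t, t ^ σ * y ^ ((n : ℝ) - 1 - σ) = y ^ (n - 1) * (t / y) ^ σ := by
    intro y hy
    have hy0 : 0 < y := ht.trans hy
    rw [Real.div_rpow ht.le hy0.le, ← Real.rpow_natCast y (n - 1), Nat.cast_sub hn,
      Real.rpow_sub hy0, Nat.cast_one]
    ring
  apply IntegrableOn.congr_fun _ key measurableSet_Ioi
  exact (integrableOn_Ioi_rpow_of_lt (by linarith) ht).const_mul _

lemma I3_val {n : ℕ} {t σ : ℝ} (hn : 1 ≤ n) (ht : 0 < t) (hσ : (n : ℝ) < σ) :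
    ∫ y in Ioi t, y ^ (n - 1) * (t / y) ^ σ = t ^ n / (σ - n) := by
  have key : ∀ y ∈ Ioi t, t ^ σ * y ^ ((n : ℝ) - 1 - σ) = y ^ (n - 1) * (t / y) ^ σ := by
    intro y hy
    have hy0 : 0 < y := ht.trans hy
    rw [Real.div_rpow ht.le hy0.le, ← Real.rpow_natCast y (n - 1), Nat.cast_sub hn,
      Real.rpow_sub hy0, Nat.cast_one]
    ring
  rw [← setIntegral_congr_fun measurableSet_Ioi key, integral_const_mul,
    integral_Ioi_rpow_of_lt (by linarith) ht]
  have h1 : (n : ℝ) - 1 - σ + 1 = (n : ℝ) - σ := by ring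
  rw [h1]
  have hne1 : (n : ℝ) - σ ≠ 0 := by linarith
  have hne2 : σ - (n : ℝ) ≠ 0 := by linarith
  have h2 : -t ^ ((n : ℝ) - σ) / ((n : ℝ) - σ) = t ^ ((n : ℝ) - σ) / (σ - n) := by
    field_simp
    ring
  rw [h2, mul_div_assoc', ← Real.rpow_add ht]
  norm_num

lemma lintegral_fun_norm_addHaar' {E : Type*} [NormedAddCommGroup E] [NormedSpace ℝ E]
    [MeasurableSpace E] [BorelSpace E] [Nontrivial E] [FiniteDimensional ℝ E]
    (μ : Measure E) [μ.IsAddHaarMeasure] (f : ℝ → ℝ≥0∞) (hf : Measurable f) :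
    ∫⁻ x, f ‖x‖ ∂μ
      = (dim E) * μ (ball 0 1) * ∫⁻ y in Ioi (0 : ℝ), ENNReal.ofReal (y ^ (dim E - 1)) * f y := by
  have hm1 : AEMeasurable (fun x : sphere (0 : E) 1 × Ioi (0 : ℝ) => f ↑x.2)
      (μ.toSphere.prod (.volumeIoiPow (dim E - 1))) := by
    exact (hf.comp (measurable_subtype_coe.comp measurable_snd)).aemeasurable
  have hm2 : Measurable fun y : Ioi (0 : ℝ) => f ↑y := by
    exact hf.comp measurable_subtype_coe
  calc
    ∫⁻ x, f ‖x‖ ∂μ = ∫⁻ x : ({(0)}ᶜ : Set E), f ‖x.1‖ ∂(μ.comap (↑)) := by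
      rw [lintegral_subtype_comap (measurableSet_singleton _).compl fun x ↦ f (‖x‖),
        restrict_compl_singleton]
    _ = ∫⁻ x : sphere (0 : E) 1 × Ioi (0 : ℝ), f x.2
          ∂(μ.toSphere.prod (.volumeIoiPow (dim E - 1))) :=
      by simpa using (μ.measurePreserving_homeomorphUnitSphereProd.lintegral_comp_emb
        (Homeomorph.measurableEmbedding _) (fun x => f x.2))
    _ = μ.toSphere univ * ∫⁻ y : Ioi (0 : ℝ), f y ∂(Measure.volumeIoiPow (dim E - 1)) := by
      rw [lintegral_prod _ hm1]
      simp [lintegral_const, mul_comm]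
    _ = (dim E) * μ (ball 0 1) * ∫⁻ y : Ioi (0 : ℝ), f y ∂(Measure.volumeIoiPow (dim E - 1)) := by
      rw [μ.toSphere_apply_univ]
    _ = _ := by
      rw [Measure.volumeIoiPow,
        lintegral_withDensity_eq_lintegral_mul _
          ((measurable_subtype_coe.pow_const _).ennreal_ofReal) hm2,
        ← lintegral_subtype_comap measurableSet_Ioi
          (fun y : ℝ => ENNReal.ofReal (y ^ (dim E - 1)) * f y)]
      rfl

lemma setIntegral_ball_fun_norm {E : Type*} [NormedAddCommGroup E] [NormedSpace ℝ E]
    [MeasurableSpace E] [BorelSpace E] [Nontrivial E] [FiniteDimensional ℝ E]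
    (μ : Measure E) [μ.IsAddHaarMeasure] (R : ℝ) (g : ℝ → ℝ) :
    ∫ x in ball (0 : E) R, g ‖x‖ ∂μ
      = (dim E) * (μ (ball 0 1)).toReal * ∫ y in Ioo (0 : ℝ) R, y ^ (dim E - 1) * g y := by
  have h1 : ∫ x in ball (0 : E) R, g ‖x‖ ∂μ = ∫ x, (Iio R).indicator g ‖x‖ ∂μ := by
    rw [← integral_indicator measurableSet_ball]
    congr 1
    ext x
    have : x ∈ ball (0 : E) R ↔ ‖x‖ ∈ Iio R := by simp [mem_ball, dist_eq_norm]
    by_cases hx : x ∈ ball (0 : E) R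
    · rw [indicator_of_mem hx, indicator_of_mem (this.1 hx)]
    · rw [indicator_of_notMem hx, indicator_of_notMem (fun h => hx (this.2 h))]
  rw [h1, integral_fun_norm_addHaar μ ((Iio R).indicator g), nsmul_eq_mul, smul_eq_mul]
  rw [mul_assoc]
  congr 1
  congr 1
  have h2 : ∀ y : ℝ, y ^ (dim E - 1) • (Iio R).indicator g y
      = (Iio R).indicator (fun y => y ^ (dim E - 1) * g y) y := by
    intro y
    by_cases hy : y ∈ Iio R
    · rw [indicator_of_mem hy, indicator_of_mem hy, smul_eq_mul]
    · rw [indicator_of_notMem hy, indicator_of_notMem hy, smul_zero]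
  rw [integral_congr_ae (Filter.Eventually.of_forall fun y => h2 y),
    setIntegral_indicator measurableSet_Iio]
  congr 1

lemma lintegral_h_rpow {E : Type*} [NormedAddCommGroup E] [NormedSpace ℝ E]
    [MeasurableSpace E] [BorelSpace E] [Nontrivial E] [FiniteDimensional ℝ E]
    (μ : Measure E) [μ.IsAddHaarMeasure] {p s t : ℝ} (hp : 0 < p) (hs : 1 < s) (ht : 0 < t) :
    ∫⁻ x : E, (ENNReal.ofReal
        (if ‖x‖ < t then Real.exp (s / p) else (t / ‖x‖) ^ ((dim E : ℝ) * s / p))) ^ p ∂μ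
      = μ (ball 0 t) * ENNReal.ofReal (Real.exp s + 1 / (s - 1)) := by
  set N := dim E with hN
  have hn : 1 ≤ N := Module.finrank_pos
  have hn0 : (0 : ℝ) < N := by exact_mod_cast hn
  set W : ℝ → ℝ≥0∞ := fun y =>
    if y < t then ENNReal.ofReal (Real.exp s) else ENNReal.ofReal ((t / y) ^ ((N : ℝ) * s)) with hW
  have hWm : Measurable W := by
    apply Measurable.ite measurableSet_Iio measurable_const
    exact Measurable.ennreal_ofReal (by fun_prop)
  have key : ∀ x : E, (ENNReal.ofReal
      (if ‖x‖ < t then Real.exp (s / p) else (t / ‖x‖) ^ ((N : ℝ) * s / p))) ^ p = W ‖x‖ := by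
    intro x
    by_cases hx : ‖x‖ < t
    · rw [if_pos hx, hW]
      simp only [if_pos hx]
      rw [ENNReal.ofReal_rpow_of_pos (Real.exp_pos _), ← Real.exp_mul]
      rw [div_mul_cancel₀ _ hp.ne']
    · rw [if_neg hx, hW]
      simp only [if_neg hx]
      have hxt : t ≤ ‖x‖ := not_lt.1 hx
      have hx0 : (0 : ℝ) < ‖x‖ := lt_of_lt_of_le ht hxt
      have hb : (0 : ℝ) < t / ‖x‖ := div_pos ht hx0
      rw [ENNReal.ofReal_rpow_of_pos (Real.rpow_pos_of_pos hb _), ← Real.rpow_mul hb.le,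
        div_mul_cancel₀ _ hp.ne']
  rw [lintegral_congr key, lintegral_fun_norm_addHaar' μ W hWm, ← hN]
  have hsplit : Ioo (0:ℝ) t ∪ Ici t = Ioi (0:ℝ) := Ioo_union_Ici_eq_Ioi ht
  have hdisj : Disjoint (Ioo (0:ℝ) t) (Ici t) :=
    Set.disjoint_left.2 fun y hy1 hy2 => (not_lt.2 hy2) hy1.2
  rw [← hsplit, lintegral_union measurableSet_Ici hdisj]
  have e1 : ∫⁻ y in Ioo (0:ℝ) t, ENNReal.ofReal (y ^ (N - 1)) * W y
      = ENNReal.ofReal (Real.exp s * t ^ N / N) := by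
    rw [setLIntegral_congr_fun measurableSet_Ioo (
      (fun y (hy : y ∈ Ioo (0:ℝ) t) => show ENNReal.ofReal (y ^ (N - 1)) * W y
        = ENNReal.ofReal (y ^ (N - 1) * Real.exp s) by
      rw [hW]; simp only [if_pos hy.2]
      rw [← ENNReal.ofReal_mul (pow_nonneg hy.1.le _)]))]
    have hint : IntegrableOn (fun y : ℝ => y ^ (N - 1) * Real.exp s) (Ioo 0 t) := by
      have : IntervalIntegrable (fun y : ℝ => y ^ (N - 1) * Real.exp s) volume 0 t :=
        Continuous.intervalIntegrable (by continuity) _ _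
      exact this.1.mono_set Ioo_subset_Ioc_self
    rw [← ofReal_integral_eq_lintegral_ofReal hint ((ae_restrict_iff' measurableSet_Ioo).2
      (ae_of_all _ fun y hy => mul_nonneg (pow_nonneg hy.1.le _) (Real.exp_pos s).le)),
      I1' hn _ ht]
  have hσ : (N : ℝ) < (N : ℝ) * s := (lt_mul_iff_one_lt_right hn0).2 hs
  have e2 : ∫⁻ y in Ici t, ENNReal.ofReal (y ^ (N - 1)) * W y
      = ENNReal.ofReal (t ^ N / ((N : ℝ) * s - N)) := by
    rw [setLIntegral_congr_fun measurableSet_Ici (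
      (fun y (hy : y ∈ Ici t) => show ENNReal.ofReal (y ^ (N - 1)) * W y
        = ENNReal.ofReal (y ^ (N - 1) * (t / y) ^ ((N : ℝ) * s)) by
      rw [hW]; simp only [if_neg (not_lt.2 (mem_Ici.1 hy))]
      have hy0 : (0:ℝ) < y := lt_of_lt_of_le ht hy
      rw [← ENNReal.ofReal_mul (by positivity)])),
      setLIntegral_congr (Filter.EventuallyEq.symm Ioi_ae_eq_Ici),
      ← ofReal_integral_eq_lintegral_ofReal (I3_int hn ht hσ)
        ((ae_restrict_iff' measurableSet_Ioi).2 (ae_of_all _ fun y hy => by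
          have hy0 : (0:ℝ) < y := ht.trans hy
          positivity)),
      I3_val hn ht hσ]
  rw [e1, e2, Measure.addHaar_ball μ 0 ht.le, ← hN]
  rw [← ENNReal.ofReal_add (by positivity) (div_nonneg (by positivity) (by linarith [hσ]))]
  have hreal : Real.exp s * t ^ N / N + t ^ N / ((N : ℝ) * s - N)
      = (t ^ N * (Real.exp s + 1 / (s - 1))) / N := by
    have h1 : (N : ℝ) ≠ 0 := hn0.ne'
    have h2 : s - 1 ≠ 0 := by linarith
    have h3 : (N : ℝ) * s - N = N * (s - 1) := by ring
    rw [h3]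
    field_simp
  rw [hreal]
  have hNe : (N : ℝ≥0∞) = ENNReal.ofReal (N : ℝ) := by
    rw [ENNReal.ofReal_natCast]
  rw [hNe, mul_right_comm, ← ENNReal.ofReal_mul (by positivity)]
  have harg : (N : ℝ) * (t ^ N * (Real.exp s + 1 / (s - 1)) / N)
      = t ^ N * (Real.exp s + 1 / (s - 1)) := by
    field_simp
  rw [harg, ENNReal.ofReal_mul (by positivity)]
  ring

/-- The radial profile of the logarithm of the test function. -/
noncomputable def Lfun (t c : ℝ) (a : ℝ) : ℝ → ℝ := fun y =>
  if y < t then a else c * (Real.log t - Real.log y)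

lemma Lfun_measurable (t c a : ℝ) : Measurable (Lfun t c a) := by
  apply Measurable.ite measurableSet_Iio measurable_const
  exact measurable_const.mul (measurable_const.sub Real.measurable_log)

lemma Lfun_integrableOn_ball {E : Type*} [NormedAddCommGroup E] [NormedSpace ℝ E]
    [MeasurableSpace E] [BorelSpace E] [Nontrivial E] [FiniteDimensional ℝ E]
    (μ : Measure E) [μ.IsAddHaarMeasure] {t : ℝ} (ht : 0 < t) (c a : ℝ) {R : ℝ} (hR : 0 < R) :
    IntegrableOn (fun x => Lfun t c a ‖x‖) (ball (0 : E) R) μ := by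
  apply Measure.integrableOn_of_bounded (M := |a| + |c| * |Real.log t - Real.log R|)
    measure_ball_lt_top.ne
    (((Lfun_measurable t c a).comp measurable_norm).aestronglyMeasurable)
  rw [ae_restrict_iff' measurableSet_ball]
  apply ae_of_all
  intro x hx
  rw [mem_ball, dist_zero_right] at hx
  simp only [Function.comp, Lfun, Real.norm_eq_abs]
  by_cases hxt : ‖x‖ < t
  · rw [if_pos hxt]
    have : (0:ℝ) ≤ |c| * |Real.log t - Real.log R| := by positivity
    linarith [le_abs_self a, neg_abs_le a, abs_nonneg a]
  · rw [if_neg hxt]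
    push_neg at hxt
    have hx0 : (0:ℝ) < ‖x‖ := lt_of_lt_of_le ht hxt
    have h1 : Real.log t ≤ Real.log ‖x‖ := Real.log_le_log ht hxt
    have h2 : Real.log ‖x‖ ≤ Real.log R := Real.log_le_log hx0 hx.le
    have h3 : |Real.log t - Real.log ‖x‖| ≤ |Real.log t - Real.log R| := by
      rw [abs_sub_comm, abs_of_nonneg (by linarith), abs_sub_comm, abs_of_nonneg (by linarith)]
      linarith
    rw [abs_mul]
    have := mul_le_mul_of_nonneg_left h3 (abs_nonneg c)
    linarith [abs_nonneg a, le_abs_self a]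

lemma Lfun_setIntegral_ball {E : Type*} [NormedAddCommGroup E] [NormedSpace ℝ E]
    [MeasurableSpace E] [BorelSpace E] [Nontrivial E] [FiniteDimensional ℝ E]
    (μ : Measure E) [μ.IsAddHaarMeasure] {t R a : ℝ} (ht : 0 < t) (htR : t ≤ R) :
    ∫ x in ball (0 : E) R, Lfun t ((dim E : ℝ) * a) a ‖x‖ ∂μ
      = a * ((μ (ball 0 1)).toReal * R ^ (dim E))
          * (1 + (dim E : ℝ) * (Real.log t - Real.log R)) := by
  set N := dim E with hN
  have hn : 1 ≤ N := Module.finrank_pos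
  have hn0 : (0 : ℝ) < N := by exact_mod_cast hn
  rw [setIntegral_ball_fun_norm μ R (Lfun t ((N : ℝ) * a) a), ← hN]
  have hsplit : Ioo (0:ℝ) t ∪ Ico t R = Ioo (0:ℝ) R := Ioo_union_Ico_eq_Ioo ht htR
  have hdisj : Disjoint (Ioo (0:ℝ) t) (Ico t R) :=
    Set.disjoint_left.2 fun y hy1 hy2 => (not_lt.2 hy2.1) hy1.2
  have heq1 : EqOn (fun y : ℝ => y ^ (N - 1) * Lfun t ((N : ℝ) * a) a y)
      (fun y : ℝ => y ^ (N - 1) * a) (Ioo (0:ℝ) t) := by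
    intro y hy; simp only [Lfun, if_pos hy.2]
  have heq2 : EqOn (fun y : ℝ => y ^ (N - 1) * Lfun t ((N : ℝ) * a) a y)
      (fun y : ℝ => a * ((N : ℝ) * y ^ (N - 1) * (Real.log t - Real.log y))) (Ico t R) := by
    intro y hy; simp only [Lfun, if_neg (not_lt.2 hy.1)]; ring
  have hint1 : IntegrableOn (fun y : ℝ => y ^ (N - 1) * a) (Ioo (0:ℝ) t) :=
    ((Continuous.intervalIntegrable (by continuity) 0 t).1).mono_set Ioo_subset_Ioc_self
  have hint2 : IntegrableOn
      (fun y : ℝ => a * ((N : ℝ) * y ^ (N - 1) * (Real.log t - Real.log y))) (Ico t R) := by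
    have hcont : ContinuousOn
        (fun y : ℝ => a * ((N : ℝ) * y ^ (N - 1) * (Real.log t - Real.log y))) (Icc t R) := by
      apply ContinuousOn.mul continuousOn_const
      apply ContinuousOn.mul (by fun_prop)
      apply ContinuousOn.sub continuousOn_const
      apply Real.continuousOn_log.mono
      intro y hy
      simp only [Set.mem_compl_iff, Set.mem_singleton_iff]
      exact ne_of_gt (lt_of_lt_of_le ht hy.1)
    exact (hcont.integrableOn_compact isCompact_Icc).mono_set Ico_subset_Icc_self
  rw [← hsplit, setIntegral_union hdisj measurableSet_Ico
      (hint1.congr_fun heq1.symm measurableSet_Ioo)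
      (hint2.congr_fun heq2.symm measurableSet_Ico),
    setIntegral_congr_fun measurableSet_Ioo heq1,
    setIntegral_congr_fun measurableSet_Ico heq2,
    I1' hn a ht, integral_const_mul, I2 hn ht htR]
  have h1 : (N:ℝ) ≠ 0 := hn0.ne'
  field_simp
  ring

/-- Necessity half, with explicit lower bound
`e^{s/p} (e^s + 1/(s-1))^{-1/p} D(s) ≤ C`, of the two-weight criterion for the
multidimensional geometric mean operator (constant-exponent case of Theorem 3
of the paper). -/
theorem geometric_mean_two_weight_necessity
    (n : ℕ) (hn : 1 ≤ n) (p q : ℝ) (hp : 0 < p) (hpq : p ≤ q)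
    (v w : EuclideanSpace ℝ (Fin n) → ℝ)
    (hv : Measurable v) (hv0 : ∀ x, 0 ≤ v x) (hvpos : ∀ᵐ x, 0 < v x)
    (hw : Measurable w) (hw0 : ∀ x, 0 ≤ w x) (hwpos : ∀ᵐ x, 0 < w x)
    (hvlog : ∀ r : ℝ, 0 < r →
      IntegrableOn (fun y => Real.log (v y)⁻¹)
        (ball (0 : EuclideanSpace ℝ (Fin n)) r))
    (C : ℝ) (hC : 0 < C)
    (hineq : ∀ f : EuclideanSpace ℝ (Fin n) → ℝ, Measurable f → (∀ x, 0 < f x) →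
      (∀ r : ℝ, 0 < r →
        IntegrableOn (fun y => Real.log (f y))
          (ball (0 : EuclideanSpace ℝ (Fin n)) r)) →
      (∫⁻ x, ENNReal.ofReal
            (Real.exp ((volume (ball (0 : EuclideanSpace ℝ (Fin n)) ‖x‖)).toReal⁻¹ *
                ∫ y in ball (0 : EuclideanSpace ℝ (Fin n)) ‖x‖, Real.log (f y)) *
              w x) ^ q) ^ (1 / q)
        ≤ ENNReal.ofReal C *
          (∫⁻ x, ENNReal.ofReal (f x * v x) ^ p) ^ (1 / p)) :
    ∀ s : ℝ, s ∈ Set.Ioi (1 : ℝ) →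
      ENNReal.ofReal
          (Real.exp (s / p) * (Real.exp s + 1 / (s - 1)) ^ (-(1 / p))) *
        (⨆ t ∈ Set.Ioi (0 : ℝ),
          (volume (ball (0 : EuclideanSpace ℝ (Fin n)) t)) ^ ((s - 1) / p) *
          (∫⁻ x in {x : EuclideanSpace ℝ (Fin n) | t < ‖x‖},
              (ENNReal.ofReal (w x) *
                (volume (ball (0 : EuclideanSpace ℝ (Fin n)) ‖x‖)) ^ (-(s / p)) *
                ENNReal.ofReal
                  (Real.exp
                    ((volume (ball (0 : EuclideanSpace ℝ (Fin n)) ‖x‖)).toReal⁻¹ *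
                      ∫ y in ball (0 : EuclideanSpace ℝ (Fin n)) ‖x‖,
                        Real.log (v y)⁻¹))) ^ q) ^ (1 / q))
        ≤ ENNReal.ofReal C := by
  intro s hs
  rw [Set.mem_Ioi] at hs
  haveI : Nonempty (Fin n) := ⟨⟨0, hn⟩⟩
  haveI : Nontrivial (EuclideanSpace ℝ (Fin n)) := by infer_instance
  have hdim : Module.finrank ℝ (EuclideanSpace ℝ (Fin n)) = n := finrank_euclideanSpace_fin
  have hq : 0 < q := lt_of_lt_of_le hp hpq
  have hs1 : (0:ℝ) < s - 1 := by linarith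
  have hK1 : (0:ℝ) < Real.exp s + 1 / (s - 1) := by positivity
  rw [ENNReal.mul_iSup]
  refine iSup_le fun t => ?_
  rw [ENNReal.mul_iSup]
  refine iSup_le fun ht => ?_
  have ht0 : (0:ℝ) < t := ht
  -- the test function
  set L : ℝ → ℝ := Lfun t ((n : ℝ) * (s / p)) (s / p) with hL
  have hLm : Measurable L := Lfun_measurable _ _ _
  set f : EuclideanSpace ℝ (Fin n) → ℝ :=
    fun x => Real.exp (L ‖x‖) * (if v x = 0 then 1 else (v x)⁻¹) with hf
  have hfm : Measurable f := by
    apply Measurable.mul (Real.measurable_exp.comp (hLm.comp measurable_norm))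
    exact Measurable.ite (hv (measurableSet_singleton 0)) measurable_const hv.inv
  have hfpos : ∀ x, 0 < f x := by
    intro x
    apply mul_pos (Real.exp_pos _)
    by_cases hx : v x = 0
    · rw [if_pos hx]; exact one_pos
    · rw [if_neg hx]; exact inv_pos.2 ((hv0 x).lt_of_ne (Ne.symm hx))
  have hflog : (fun y => Real.log (f y)) =ᵐ[volume]
      fun y => L ‖y‖ + Real.log (v y)⁻¹ := by
    filter_upwards [hvpos] with y hy
    have hvy : v y ≠ 0 := ne_of_gt hy
    simp only [hf, if_neg hvy]
    rw [Real.log_mul (Real.exp_pos _).ne' (inv_pos.2 hy).ne', Real.log_exp]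
  have hfint : ∀ r : ℝ, 0 < r →
      IntegrableOn (fun y => Real.log (f y)) (ball (0 : EuclideanSpace ℝ (Fin n)) r) := by
    intro r hr
    have h1 : IntegrableOn (fun y : EuclideanSpace ℝ (Fin n) => L ‖y‖ + Real.log (v y)⁻¹)
        (ball (0 : EuclideanSpace ℝ (Fin n)) r) :=
      (Lfun_integrableOn_ball volume ht0 _ _ hr).add (hvlog r hr)
    exact h1.congr (ae_restrict_of_ae hflog.symm)
  have H := hineq f hfm hfpos hfint
  -- ball volumes
  have hc0top : (volume (ball (0 : EuclideanSpace ℝ (Fin n)) 1)) ≠ ⊤ := measure_ball_lt_top.ne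
  set cR : ℝ := (volume (ball (0 : EuclideanSpace ℝ (Fin n)) 1)).toReal with hcR
  have hcRpos : 0 < cR :=
    ENNReal.toReal_pos (measure_ball_pos _ _ one_pos).ne' hc0top
  have hball : ∀ r : ℝ, 0 < r →
      volume (ball (0 : EuclideanSpace ℝ (Fin n)) r) = ENNReal.ofReal (r ^ n * cR) := by
    intro r hr
    rw [Measure.addHaar_ball volume (0 : EuclideanSpace ℝ (Fin n)) hr.le, hdim, hcR,
      ← ENNReal.ofReal_toReal hc0top, ← ENNReal.ofReal_mul (by positivity)]
    rw [ENNReal.toReal_ofReal (ENNReal.toReal_nonneg)]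
  have hballR : ∀ r : ℝ, 0 < r →
      (volume (ball (0 : EuclideanSpace ℝ (Fin n)) r)).toReal = r ^ n * cR := by
    intro r hr
    rw [hball r hr, ENNReal.toReal_ofReal (by positivity)]
  -- the right-hand side
  have hRHS : ∫⁻ x, ENNReal.ofReal (f x * v x) ^ p
      = volume (ball (0 : EuclideanSpace ℝ (Fin n)) t)
          * ENNReal.ofReal (Real.exp s + 1 / (s - 1)) := by
    have e2 : ∀ x : EuclideanSpace ℝ (Fin n), Real.exp (L ‖x‖)
        = if ‖x‖ < t then Real.exp (s / p) else (t / ‖x‖) ^ ((n : ℝ) * s / p) := by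
      intro x
      by_cases hxt : ‖x‖ < t
      · simp only [hL, Lfun, if_pos hxt]
      · simp only [hL, Lfun, if_neg hxt]
        have hx0 : (0:ℝ) < ‖x‖ := lt_of_lt_of_le ht0 (not_lt.1 hxt)
        rw [Real.rpow_def_of_pos (div_pos ht0 hx0), Real.log_div ht0.ne' hx0.ne']
        congr 1
        ring
    have e1 : ∫⁻ x, ENNReal.ofReal (f x * v x) ^ p
        = ∫⁻ x : EuclideanSpace ℝ (Fin n), ENNReal.ofReal
            (if ‖x‖ < t then Real.exp (s / p) else (t / ‖x‖) ^ ((n : ℝ) * s / p)) ^ p := by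
      apply lintegral_congr_ae
      filter_upwards [hvpos] with x hx
      have hvx : v x ≠ 0 := ne_of_gt hx
      simp only [hf, if_neg hvx]
      rw [mul_assoc, inv_mul_cancel₀ hvx, mul_one, e2 x]
    rw [e1]
    have := lintegral_h_rpow (volume : Measure (EuclideanSpace ℝ (Fin n))) hp hs ht0
    rw [hdim] at this
    exact this
  -- the pointwise identity on S
  set S : Set (EuclideanSpace ℝ (Fin n)) := {x : EuclideanSpace ℝ (Fin n) | t < ‖x‖} with hS
  have hSm : MeasurableSet S := measurableSet_lt measurable_const measurable_norm
  set K0 : ℝ≥0∞ := ENNReal.ofReal (Real.exp (s / p))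
      * (volume (ball (0 : EuclideanSpace ℝ (Fin n)) t)) ^ (s / p) with hK0
  have hVtT : volume (ball (0 : EuclideanSpace ℝ (Fin n)) t) ≠ ⊤ := measure_ball_lt_top.ne
  have hVt0 : volume (ball (0 : EuclideanSpace ℝ (Fin n)) t) ≠ 0 :=
    (measure_ball_pos _ _ ht0).ne'
  have hK0top : K0 ≠ ⊤ :=
    ENNReal.mul_ne_top ENNReal.ofReal_ne_top
      (ENNReal.rpow_ne_top_of_nonneg (by positivity) hVtT)
  have hpoint : ∀ x ∈ S,
      ENNReal.ofReal
          (Real.exp ((volume (ball (0 : EuclideanSpace ℝ (Fin n)) ‖x‖)).toReal⁻¹ *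
              ∫ y in ball (0 : EuclideanSpace ℝ (Fin n)) ‖x‖, Real.log (f y)) * w x) ^ q
        = K0 ^ q * (ENNReal.ofReal (w x) *
            (volume (ball (0 : EuclideanSpace ℝ (Fin n)) ‖x‖)) ^ (-(s / p)) *
            ENNReal.ofReal
              (Real.exp
                ((volume (ball (0 : EuclideanSpace ℝ (Fin n)) ‖x‖)).toReal⁻¹ *
                  ∫ y in ball (0 : EuclideanSpace ℝ (Fin n)) ‖x‖,
                    Real.log (v y)⁻¹))) ^ q := by
    intro x hx
    have hRt : t < ‖x‖ := hx
    have hR0 : (0:ℝ) < ‖x‖ := lt_trans ht0 hRt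
    rw [← ENNReal.mul_rpow_of_nonneg _ _ hq.le]
    congr 1
    have hIeq : ∫ y in ball (0 : EuclideanSpace ℝ (Fin n)) ‖x‖, Real.log (f y)
        = (s / p) * (cR * ‖x‖ ^ n) * (1 + (n : ℝ) * (Real.log t - Real.log ‖x‖))
          + ∫ y in ball (0 : EuclideanSpace ℝ (Fin n)) ‖x‖, Real.log (v y)⁻¹ := by
      rw [integral_congr_ae (ae_restrict_of_ae hflog),
        integral_add (Lfun_integrableOn_ball volume ht0 _ _ hR0) (hvlog _ hR0)]
      congr 1
      have hb := Lfun_setIntegral_ball (volume : Measure (EuclideanSpace ℝ (Fin n)))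
        (a := s / p) ht0 hRt.le
      rw [hdim, ← hcR, ← hL] at hb
      rw [hb]
    have havg : (volume (ball (0 : EuclideanSpace ℝ (Fin n)) ‖x‖)).toReal⁻¹ *
          ∫ y in ball (0 : EuclideanSpace ℝ (Fin n)) ‖x‖, Real.log (f y)
        = (s / p + ((n : ℝ) * (s / p)) * (Real.log t - Real.log ‖x‖)) +
            (volume (ball (0 : EuclideanSpace ℝ (Fin n)) ‖x‖)).toReal⁻¹ *
              ∫ y in ball (0 : EuclideanSpace ℝ (Fin n)) ‖x‖, Real.log (v y)⁻¹ := by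
      rw [hIeq, hballR _ hR0]
      have hne : ‖x‖ ^ n * cR ≠ 0 := by positivity
      field_simp
    rw [havg]
    have hrp : Real.exp (((n : ℝ) * (s / p)) * (Real.log t - Real.log ‖x‖))
        = (t / ‖x‖) ^ ((n : ℝ) * (s / p)) := by
      rw [Real.rpow_def_of_pos (div_pos ht0 hR0), Real.log_div ht0.ne' hR0.ne']
      congr 1
      ring
    have hpow : (t ^ n * cR) ^ (s / p) * (‖x‖ ^ n * cR) ^ (-(s / p))
        = (t / ‖x‖) ^ ((n : ℝ) * (s / p)) := by
      rw [Real.rpow_neg (by positivity), ← div_eq_mul_inv,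
        ← Real.div_rpow (by positivity) (by positivity),
        mul_div_mul_right _ _ hcRpos.ne', ← div_pow,
        ← Real.rpow_natCast (t / ‖x‖) n, ← Real.rpow_mul (by positivity)]
    have hreal : Real.exp ((s / p + ((n : ℝ) * (s / p)) * (Real.log t - Real.log ‖x‖)) +
          (volume (ball (0 : EuclideanSpace ℝ (Fin n)) ‖x‖)).toReal⁻¹ *
            ∫ y in ball (0 : EuclideanSpace ℝ (Fin n)) ‖x‖, Real.log (v y)⁻¹) * w x
        = Real.exp (s / p) * (t ^ n * cR) ^ (s / p) *
            (w x * (‖x‖ ^ n * cR) ^ (-(s / p)) *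
              Real.exp ((volume (ball (0 : EuclideanSpace ℝ (Fin n)) ‖x‖)).toReal⁻¹ *
                ∫ y in ball (0 : EuclideanSpace ℝ (Fin n)) ‖x‖, Real.log (v y)⁻¹)) := by
      rw [Real.exp_add, Real.exp_add, hrp, ← hpow]
      ring
    rw [hreal]
    have hVt : (volume (ball (0 : EuclideanSpace ℝ (Fin n)) t)) ^ (s / p)
        = ENNReal.ofReal ((t ^ n * cR) ^ (s / p)) := by
      rw [hball t ht0, ENNReal.ofReal_rpow_of_pos (by positivity)]
    have hVR : (volume (ball (0 : EuclideanSpace ℝ (Fin n)) ‖x‖)) ^ (-(s / p))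
        = ENNReal.ofReal ((‖x‖ ^ n * cR) ^ (-(s / p))) := by
      rw [hball _ hR0, ENNReal.ofReal_rpow_of_pos (by positivity)]
    rw [hK0, hVt, hVR,
      ENNReal.ofReal_mul (by positivity),
      ENNReal.ofReal_mul (by positivity),
      ENNReal.ofReal_mul (mul_nonneg (hw0 x) (by positivity)),
      ENNReal.ofReal_mul (hw0 x)]
  -- restrict the main inequality to S
  have hSeq : ∫⁻ x in S, ENNReal.ofReal
        (Real.exp ((volume (ball (0 : EuclideanSpace ℝ (Fin n)) ‖x‖)).toReal⁻¹ *
            ∫ y in ball (0 : EuclideanSpace ℝ (Fin n)) ‖x‖, Real.log (f y)) * w x) ^ q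
      = K0 ^ q * ∫⁻ x in S, (ENNReal.ofReal (w x) *
            (volume (ball (0 : EuclideanSpace ℝ (Fin n)) ‖x‖)) ^ (-(s / p)) *
            ENNReal.ofReal
              (Real.exp
                ((volume (ball (0 : EuclideanSpace ℝ (Fin n)) ‖x‖)).toReal⁻¹ *
                  ∫ y in ball (0 : EuclideanSpace ℝ (Fin n)) ‖x‖,
                    Real.log (v y)⁻¹))) ^ q := by
    rw [setLIntegral_congr_fun hSm hpoint,
      lintegral_const_mul' _ _ (ENNReal.rpow_ne_top_of_nonneg hq.le hK0top)]
  set D : ℝ≥0∞ := (∫⁻ x in S, (ENNReal.ofReal (w x) *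
            (volume (ball (0 : EuclideanSpace ℝ (Fin n)) ‖x‖)) ^ (-(s / p)) *
            ENNReal.ofReal
              (Real.exp
                ((volume (ball (0 : EuclideanSpace ℝ (Fin n)) ‖x‖)).toReal⁻¹ *
                  ∫ y in ball (0 : EuclideanSpace ℝ (Fin n)) ‖x‖,
                    Real.log (v y)⁻¹))) ^ q) ^ (1 / q) with hD
  have hchain : K0 * D
      ≤ ENNReal.ofReal C * (volume (ball (0 : EuclideanSpace ℝ (Fin n)) t)
          * ENNReal.ofReal (Real.exp s + 1 / (s - 1))) ^ (1 / p) := by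
    calc K0 * D
        = (K0 ^ q * ∫⁻ x in S, (ENNReal.ofReal (w x) *
            (volume (ball (0 : EuclideanSpace ℝ (Fin n)) ‖x‖)) ^ (-(s / p)) *
            ENNReal.ofReal
              (Real.exp
                ((volume (ball (0 : EuclideanSpace ℝ (Fin n)) ‖x‖)).toReal⁻¹ *
                  ∫ y in ball (0 : EuclideanSpace ℝ (Fin n)) ‖x‖,
                    Real.log (v y)⁻¹))) ^ q) ^ (1 / q) := by
          rw [ENNReal.mul_rpow_of_nonneg _ _ (by positivity), ← ENNReal.rpow_mul,
            mul_one_div_cancel hq.ne', ENNReal.rpow_one, hD]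
      _ = (∫⁻ x in S, ENNReal.ofReal
            (Real.exp ((volume (ball (0 : EuclideanSpace ℝ (Fin n)) ‖x‖)).toReal⁻¹ *
                ∫ y in ball (0 : EuclideanSpace ℝ (Fin n)) ‖x‖, Real.log (f y)) * w x) ^ q) ^ (1 / q) := by
          rw [hSeq]
      _ ≤ (∫⁻ x, ENNReal.ofReal
            (Real.exp ((volume (ball (0 : EuclideanSpace ℝ (Fin n)) ‖x‖)).toReal⁻¹ *
                ∫ y in ball (0 : EuclideanSpace ℝ (Fin n)) ‖x‖, Real.log (f y)) * w x) ^ q) ^ (1 / q) :=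
          ENNReal.rpow_le_rpow (setLIntegral_le_lintegral _ _) (by positivity)
      _ ≤ ENNReal.ofReal C * (∫⁻ x, ENNReal.ofReal (f x * v x) ^ p) ^ (1 / p) := H
      _ = ENNReal.ofReal C * (volume (ball (0 : EuclideanSpace ℝ (Fin n)) t)
            * ENNReal.ofReal (Real.exp s + 1 / (s - 1))) ^ (1 / p) := by rw [hRHS]
  -- multiply by the normalizing factor and conclude
  have hm := mul_le_mul_left hchain
    ((volume (ball (0 : EuclideanSpace ℝ (Fin n)) t)) ^ (-(1 / p))
      * ENNReal.ofReal ((Real.exp s + 1 / (s - 1)) ^ (-(1 / p))))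
  have hLHSeq : ENNReal.ofReal
        (Real.exp (s / p) * (Real.exp s + 1 / (s - 1)) ^ (-(1 / p))) *
        ((volume (ball (0 : EuclideanSpace ℝ (Fin n)) t)) ^ ((s - 1) / p) * D)
      = K0 * D * ((volume (ball (0 : EuclideanSpace ℝ (Fin n)) t)) ^ (-(1 / p))
          * ENNReal.ofReal ((Real.exp s + 1 / (s - 1)) ^ (-(1 / p)))) := by
    rw [hK0, ENNReal.ofReal_mul (Real.exp_pos _).le,
      show (s - 1) / p = s / p + -(1 / p) by ring,
      ENNReal.rpow_add _ _ hVt0 hVtT]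
    ring
  have hRHSeq : ENNReal.ofReal C * (volume (ball (0 : EuclideanSpace ℝ (Fin n)) t)
        * ENNReal.ofReal (Real.exp s + 1 / (s - 1))) ^ (1 / p) *
        ((volume (ball (0 : EuclideanSpace ℝ (Fin n)) t)) ^ (-(1 / p))
          * ENNReal.ofReal ((Real.exp s + 1 / (s - 1)) ^ (-(1 / p))))
      = ENNReal.ofReal C := by
    rw [ENNReal.mul_rpow_of_nonneg _ _ (by positivity),
      ENNReal.ofReal_rpow_of_pos hK1]
    have h1 : (volume (ball (0 : EuclideanSpace ℝ (Fin n)) t)) ^ (1 / p)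
        * (volume (ball (0 : EuclideanSpace ℝ (Fin n)) t)) ^ (-(1 / p)) = 1 := by
      rw [← ENNReal.rpow_add _ _ hVt0 hVtT]
      norm_num
    have h2 : ENNReal.ofReal ((Real.exp s + 1 / (s - 1)) ^ (1 / p))
        * ENNReal.ofReal ((Real.exp s + 1 / (s - 1)) ^ (-(1 / p))) = 1 := by
      rw [← ENNReal.ofReal_mul (by positivity), ← Real.rpow_add hK1]
      norm_num
    calc ENNReal.ofReal C * ((volume (ball (0 : EuclideanSpace ℝ (Fin n)) t)) ^ (1 / p)
          * ENNReal.ofReal ((Real.exp s + 1 / (s - 1)) ^ (1 / p))) *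
          ((volume (ball (0 : EuclideanSpace ℝ (Fin n)) t)) ^ (-(1 / p))
            * ENNReal.ofReal ((Real.exp s + 1 / (s - 1)) ^ (-(1 / p))))
        = ENNReal.ofReal C * (((volume (ball (0 : EuclideanSpace ℝ (Fin n)) t)) ^ (1 / p)
            * (volume (ball (0 : EuclideanSpace ℝ (Fin n)) t)) ^ (-(1 / p)))
          * (ENNReal.ofReal ((Real.exp s + 1 / (s - 1)) ^ (1 / p))
            * ENNReal.ofReal ((Real.exp s + 1 / (s - 1)) ^ (-(1 / p))))) := by ring
      _ = ENNReal.ofReal C := by rw [h1, h2]; simp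
  calc ENNReal.ofReal
        (Real.exp (s / p) * (Real.exp s + 1 / (s - 1)) ^ (-(1 / p))) *
        ((volume (ball (0 : EuclideanSpace ℝ (Fin n)) t)) ^ ((s - 1) / p) * D)
      = K0 * D * ((volume (ball (0 : EuclideanSpace ℝ (Fin n)) t)) ^ (-(1 / p))
          * ENNReal.ofReal ((Real.exp s + 1 / (s - 1)) ^ (-(1 / p)))) := hLHSeq
    _ ≤ ENNReal.ofReal C * (volume (ball (0 : EuclideanSpace ℝ (Fin n)) t)
          * ENNReal.ofReal (Real.exp s + 1 / (s - 1))) ^ (1 / p) *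
        ((volume (ball (0 : EuclideanSpace ℝ (Fin n)) t)) ^ (-(1 / p))
          * ENNReal.ofReal ((Real.exp s + 1 / (s - 1)) ^ (-(1 / p)))) := hm
    _ = ENNReal.ofReal C := hRHSeq
end

section
/- Let 0 < p < ∞ and β ∈ ℝ, and let f be a positive measurable function on (0,∞) with ln f locally integrable. Then ∫_0^∞ exp( (p/x) ∫_0^x ln f(t) dt ) · x^{βp} dx ≤ e^{βp + 1} · ∫_0^∞ f(x)^p · x^{βp} dx; that is, the one-dimensional weighted Pólya–Knopp inequality ∫_0^∞ (Gf(x))^p x^{βp} dx ≤ C^p ∫_0^∞ f(x)^p x^{βp} dx holds with C = e^{β + 1/p}. -/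
open MeasureTheory ENNReal Set


lemma log_integrableOn_Ioc {x : ℝ} (hx : 0 < x) :
    IntegrableOn Real.log (Set.Ioc 0 x) := by
  have hmaj : IntegrableOn (fun t : ℝ => 2 * t ^ (-1/2 : ℝ) + |Real.log x|) (Set.Ioc 0 x) := by
    apply Integrable.add
    · have : IntervalIntegrable (fun t : ℝ => t ^ (-1/2 : ℝ)) volume 0 x :=
        intervalIntegral.intervalIntegrable_rpow' (by norm_num)
      rw [intervalIntegrable_iff_integrableOn_Ioc_of_le hx.le] at this
      exact this.const_mul 2
    · exact integrableOn_const (by simp [hx])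
  refine Integrable.mono' hmaj (Real.measurable_log.aestronglyMeasurable) ?_
  filter_upwards [ae_restrict_mem measurableSet_Ioc] with t ht
  rcases le_or_gt t 1 with h1 | h1
  · have ht0 := ht.1
    have hlog : -Real.log t ≤ 2 * t ^ (-1/2 : ℝ) := by
      have h2 : Real.log (t ^ (-1/2 : ℝ)) ≤ t ^ (-1/2 : ℝ) :=
        (Real.log_le_sub_one_of_pos (Real.rpow_pos_of_pos ht0 _)).trans (by linarith [Real.rpow_pos_of_pos ht0 (-1/2 : ℝ)])
      rw [Real.log_rpow ht0] at h2
      linarith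
    have : Real.log t ≤ 0 := Real.log_nonpos ht0.le h1
    rw [Real.norm_eq_abs, abs_of_nonpos this]
    have : (0:ℝ) ≤ |Real.log x| := abs_nonneg _
    linarith
  · rw [Real.norm_eq_abs, abs_of_nonneg (Real.log_nonneg h1.le)]
    have h2 : Real.log t ≤ Real.log x := Real.log_le_log (by linarith) ht.2
    have h3 : (0:ℝ) ≤ 2 * t ^ (-1/2 : ℝ) := by positivity
    have := le_abs_self (Real.log x)
    linarith

lemma integral_log_Ioo {x : ℝ} (hx : 0 < x) :
    ∫ t in Set.Ioo (0:ℝ) x, Real.log t = x * Real.log x - x := by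
  have h := intervalIntegral.integral_eq_sub_of_hasDeriv_right_of_le hx.le
    (f := fun t : ℝ => t * Real.log t - t) (f' := Real.log)
    ((Real.continuous_mul_log.sub continuous_id).continuousOn)
    (fun t ht => by
      have h1 : HasDerivAt (fun t : ℝ => t * Real.log t - t) (Real.log t) t := by
        have := (Real.hasDerivAt_mul_log (ne_of_gt ht.1)).sub (hasDerivAt_id t)
        have h2 : Real.log t + 1 - 1 = Real.log t := by ring
        rw [h2] at this
        exact this
      exact h1.hasDerivWithinAt)
    (by rw [intervalIntegrable_iff_integrableOn_Ioc_of_le hx.le]; exact log_integrableOn_Ioc hx)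
  rw [intervalIntegral.integral_of_le hx.le] at h
  rw [← integral_Ioc_eq_integral_Ioo, h]
  simp

lemma key_pointwise (p β : ℝ) (hp : 0 < p) (f : ℝ → ℝ) (hf : Measurable f)
    (hfpos : ∀ x ∈ Set.Ioi (0 : ℝ), 0 < f x)
    (hflog : ∀ x : ℝ, 0 < x →
      IntegrableOn (fun t => Real.log (f t)) (Set.Ioo (0 : ℝ) x))
    {x : ℝ} (hx : 0 < x) :
    ENNReal.ofReal
        (Real.exp ((p / x) * ∫ t in Set.Ioo (0 : ℝ) x, Real.log (f t)) * x ^ (β * p))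
      ≤ ENNReal.ofReal (Real.exp (β * p + 1)) * ENNReal.ofReal (x ^ (-2 : ℝ)) *
        ∫⁻ t in Set.Ioo (0:ℝ) x, ENNReal.ofReal (f t ^ p * t ^ (β * p + 1)) := by
  set c : ℝ := β * p + 1 with hc
  set E : ℝ → ℝ := fun t => f t ^ p * t ^ c with hE
  have hEmeas : Measurable E := by
    apply Measurable.mul <;> measurability
  set μ := volume.restrict (Set.Ioo (0:ℝ) x) with hμ
  have hEnn : 0 ≤ᵐ[μ] E := by
    filter_upwards [ae_restrict_mem measurableSet_Ioo] with t ht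
    exact mul_nonneg (Real.rpow_nonneg (hfpos t ht.1).le _) (Real.rpow_nonneg ht.1.le _)
  set I : ℝ := ∫ t in Set.Ioo (0:ℝ) x, Real.log (f t) with hI
  by_cases hEint : IntegrableOn E (Set.Ioo (0:ℝ) x)
  · -- Jensen case
    set g : ℝ → ℝ := fun t => p * Real.log (f t) + c * Real.log t with hg
    have hint1 : Integrable (fun t => p * Real.log (f t)) μ := (hflog x hx).const_mul p
    have hint2 : Integrable (fun t => c * Real.log t) μ :=
      ((log_integrableOn_Ioc hx).mono_set Set.Ioo_subset_Ioc_self).const_mul c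
    have hgint : Integrable g μ := hint1.add hint2
    have hEeq : ∀ t ∈ Set.Ioo (0:ℝ) x, E t = Real.exp (g t) := by
      intro t ht
      have hft := hfpos t ht.1
      rw [hg, hE]
      simp only
      rw [Real.exp_add, Real.rpow_def_of_pos hft, Real.rpow_def_of_pos ht.1,
        mul_comm (Real.log (f t)) p, mul_comm (Real.log t) c]
    have hEaeq : E =ᵐ[μ] fun t => Real.exp (g t) := by
      filter_upwards [ae_restrict_mem measurableSet_Ioo] with t ht
      exact hEeq t ht
    have hexpint : Integrable (Real.exp ∘ g) μ := hEint.congr hEaeq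
    have hne : NeZero μ := by
      constructor
      simp only [hμ, ne_eq, Measure.restrict_eq_zero, Real.volume_Ioo, sub_zero,
        ofReal_eq_zero, not_le]
      exact hx
    have hfin : IsFiniteMeasure μ := by
      constructor
      rw [hμ, Measure.restrict_apply_univ, Real.volume_Ioo]
      exact ofReal_lt_top
    have hjen := convexOn_exp.map_average_le Real.continuous_exp.continuousOn
      isClosed_univ (Filter.Eventually.of_forall fun _ => mem_univ _) hgint hexpint
    rw [average_eq, average_eq] at hjen
    have hμuniv : (μ Set.univ).toReal = x := by
      rw [hμ, Measure.restrict_apply_univ, Real.volume_Ioo, sub_zero, toReal_ofReal hx.le]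
    rw [measureReal_def, hμuniv] at hjen
    have hgI : ∫ t, g t ∂μ = p * I + c * (x * Real.log x - x) := by
      rw [hg, integral_add hint1 hint2, integral_const_mul, integral_const_mul,
        integral_log_Ioo hx]
    have hexpE : ∫ t, Real.exp (g t) ∂μ = ∫ t, E t ∂μ := integral_congr_ae hEaeq.symm
    rw [hgI, hexpE] at hjen
    -- hjen : exp (x⁻¹ • (p*I + c*(x log x - x))) ≤ x⁻¹ • ∫ E
    have hxne : x ≠ 0 := hx.ne'
    have hA : x⁻¹ • (p * I + c * (x * Real.log x - x)) = (p / x) * I + c * Real.log x - c := by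
      rw [smul_eq_mul]
      have hxx : x * x⁻¹ = 1 := mul_inv_cancel₀ hxne
      linear_combination (c * Real.log x - c) * hxx
    rw [hA] at hjen
    have hxc : Real.exp (c * Real.log x) = x ^ c := by
      rw [Real.rpow_def_of_pos hx, mul_comm]
    have hkey : Real.exp ((p / x) * I) * x ^ (β * p)
        ≤ Real.exp c * x ^ (-2:ℝ) * ∫ t, E t ∂μ := by
      have h1 : Real.exp ((p / x) * I) * x ^ (β * p)
          = Real.exp ((p / x) * I + c * Real.log x - c) * Real.exp c * x⁻¹ := by
        rw [Real.exp_sub, Real.exp_add, hxc]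
        have : x ^ c = x ^ (β * p) * x := by
          rw [hc, Real.rpow_add hx, Real.rpow_one]
        rw [this]
        field_simp [Real.exp_ne_zero]
      have h2 : x ^ (-2:ℝ) = x⁻¹ * x⁻¹ := by
        rw [show (-2:ℝ) = (-1) + (-1) by norm_num, Real.rpow_add hx,
          Real.rpow_neg_one]
      rw [h1, h2]
      have hmul := mul_le_mul_of_nonneg_right
        (mul_le_mul_of_nonneg_right hjen (Real.exp_pos c).le) (inv_nonneg.2 hx.le)
      calc Real.exp ((p / x) * I + c * Real.log x - c) * Real.exp c * x⁻¹
          ≤ (x⁻¹ • ∫ t, E t ∂μ) * Real.exp c * x⁻¹ := hmul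
        _ = Real.exp c * (x⁻¹ * x⁻¹) * ∫ t, E t ∂μ := by
            simp only [smul_eq_mul]; ring
    calc ENNReal.ofReal (Real.exp ((p / x) * I) * x ^ (β * p))
        ≤ ENNReal.ofReal (Real.exp c * x ^ (-2:ℝ) * ∫ t, E t ∂μ) :=
          ofReal_le_ofReal hkey
      _ = ENNReal.ofReal (Real.exp c) * ENNReal.ofReal (x ^ (-2:ℝ)) *
            ENNReal.ofReal (∫ t, E t ∂μ) := by
          rw [ENNReal.ofReal_mul (by positivity), ENNReal.ofReal_mul (Real.exp_pos c).le]
      _ = ENNReal.ofReal (Real.exp c) * ENNReal.ofReal (x ^ (-2:ℝ)) *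
            ∫⁻ t in Set.Ioo (0:ℝ) x, ENNReal.ofReal (E t) := by
          rw [ofReal_integral_eq_lintegral_ofReal hEint hEnn]
  · have htop : ∫⁻ t in Set.Ioo (0:ℝ) x, ENNReal.ofReal (E t) = ∞ := by
      by_contra h
      exact hEint ((lintegral_ofReal_ne_top_iff_integrable
        hEmeas.aestronglyMeasurable hEnn).mp h)
    rw [htop, ENNReal.mul_top]
    · exact le_top
    · exact mul_ne_zero (ofReal_pos.2 (Real.exp_pos _)).ne'
        (ofReal_pos.2 (Real.rpow_pos_of_pos hx _)).ne'

/-- The one-dimensional weighted Pólya–Knopp inequality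
`∫_0^∞ (Gf(x))^p x^{βp} dx ≤ e^{βp+1} ∫_0^∞ f(x)^p x^{βp} dx`, where
`Gf(x) = exp((1/x)∫_0^x ln f)`; case `n = 1`, `p = q`, `γ = β` of Corollary 1
and Remark 3 of the paper. -/
theorem polya_knopp_power_weight
    (p β : ℝ) (hp : 0 < p) (f : ℝ → ℝ) (hf : Measurable f)
    (hfpos : ∀ x ∈ Set.Ioi (0 : ℝ), 0 < f x)
    (hflog : ∀ x : ℝ, 0 < x →
      IntegrableOn (fun t => Real.log (f t)) (Set.Ioo (0 : ℝ) x)) :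
    ∫⁻ x in Set.Ioi (0 : ℝ),
        ENNReal.ofReal
          (Real.exp ((p / x) * ∫ t in Set.Ioo (0 : ℝ) x, Real.log (f t)) *
            x ^ (β * p))
      ≤ ENNReal.ofReal (Real.exp (β * p + 1)) *
        ∫⁻ x in Set.Ioi (0 : ℝ), ENNReal.ofReal (f x ^ p * x ^ (β * p)) := by
  set c : ℝ := β * p + 1 with hc
  set F : ℝ → ℝ≥0∞ := fun t => ENNReal.ofReal (f t ^ p * t ^ c) with hF
  have hFmeas : Measurable F := by
    apply Measurable.ennreal_ofReal
    apply Measurable.mul <;> measurability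
  set K : ℝ × ℝ → ℝ≥0∞ :=
    fun z => {q : ℝ × ℝ | q.2 < q.1}.indicator
      (fun q => ENNReal.ofReal (q.1 ^ (-2 : ℝ)) * F q.2) z with hK
  have hKmeas : Measurable K := by
    apply Measurable.indicator
    · exact ((by measurability : Measurable fun q : ℝ × ℝ => q.1 ^ (-2 : ℝ)).ennreal_ofReal).mul
        (hFmeas.comp measurable_snd)
    · exact measurableSet_lt measurable_snd measurable_fst
  have claimA : ∀ x : ℝ, 0 < x →
      ENNReal.ofReal (x ^ (-2 : ℝ)) * ∫⁻ t in Set.Ioo (0:ℝ) x, F t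
        = ∫⁻ t in Set.Ioi (0:ℝ), K (x, t) := by
    intro x hx
    have h1 : ∫⁻ t in Set.Ioi (0:ℝ), K (x, t)
        = ∫⁻ t in Set.Ioi (0:ℝ),
            (Set.Ioo (0:ℝ) x).indicator (fun t => ENNReal.ofReal (x ^ (-2:ℝ)) * F t) t := by
      apply setLIntegral_congr_fun measurableSet_Ioi
      intro t ht
      simp only [hK]
      by_cases hlt : t < x
      · simp [Set.indicator_apply, Set.mem_setOf_eq, Set.mem_Ioo, hlt, Set.mem_Ioi.1 ht]
      · simp [Set.indicator_apply, Set.mem_setOf_eq, Set.mem_Ioo, hlt]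
    rw [h1, lintegral_indicator measurableSet_Ioo, Measure.restrict_restrict measurableSet_Ioo,
      Set.inter_eq_self_of_subset_left Set.Ioo_subset_Ioi_self,
      lintegral_const_mul' _ _ ofReal_ne_top]
  have claimB : ∀ t : ℝ, 0 < t →
      ∫⁻ x in Set.Ioi (0:ℝ), K (x, t) = ENNReal.ofReal (f t ^ p * t ^ (β * p)) := by
    intro t ht
    have h1 : ∫⁻ x in Set.Ioi (0:ℝ), K (x, t)
        = ∫⁻ x in Set.Ioi (0:ℝ),
            (Set.Ioi t).indicator (fun x => ENNReal.ofReal (x ^ (-2:ℝ)) * F t) x := by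
      apply setLIntegral_congr_fun measurableSet_Ioi
      intro x hx
      simp only [hK]
      by_cases hlt : t < x
      · simp [Set.indicator_apply, Set.mem_setOf_eq, Set.mem_Ioi, hlt]
      · simp [Set.indicator_apply, Set.mem_setOf_eq, Set.mem_Ioi, hlt]
    have h2 : Set.Ioi t ∩ Set.Ioi (0:ℝ) = Set.Ioi t := by
      rw [Set.Ioi_inter_Ioi, max_eq_left ht.le]
    rw [h1, lintegral_indicator measurableSet_Ioi, Measure.restrict_restrict measurableSet_Ioi,
      h2, lintegral_mul_const' _ _ ofReal_ne_top]
    have h3 : ∫⁻ x in Set.Ioi t, ENNReal.ofReal (x ^ (-2:ℝ)) = ENNReal.ofReal (t ^ (-1:ℝ)) := by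
      rw [← ofReal_integral_eq_lintegral_ofReal (integrableOn_Ioi_rpow_of_lt (by norm_num) ht)
        (by filter_upwards [ae_restrict_mem measurableSet_Ioi] with x hx
            exact Real.rpow_nonneg (ht.trans hx).le _),
        integral_Ioi_rpow_of_lt (by norm_num) ht]
      norm_num
    rw [h3, ← ENNReal.ofReal_mul (Real.rpow_nonneg ht.le _)]
    congr 1
    rw [show t ^ (-1:ℝ) * (f t ^ p * t ^ c) = f t ^ p * (t ^ c * t ^ (-1:ℝ)) by ring,
      ← Real.rpow_add ht]
    norm_num [hc]
  calc ∫⁻ x in Set.Ioi (0 : ℝ),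
        ENNReal.ofReal
          (Real.exp ((p / x) * ∫ t in Set.Ioo (0 : ℝ) x, Real.log (f t)) * x ^ (β * p))
      ≤ ∫⁻ x in Set.Ioi (0:ℝ),
          ENNReal.ofReal (Real.exp c) * (ENNReal.ofReal (x ^ (-2:ℝ)) *
            ∫⁻ t in Set.Ioo (0:ℝ) x, F t) := by
        apply lintegral_mono_ae
        filter_upwards [ae_restrict_mem measurableSet_Ioi] with x hx
        rw [← mul_assoc]
        exact key_pointwise p β hp f hf hfpos hflog hx
    _ = ENNReal.ofReal (Real.exp c) *
          ∫⁻ x in Set.Ioi (0:ℝ), ENNReal.ofReal (x ^ (-2:ℝ)) *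
            ∫⁻ t in Set.Ioo (0:ℝ) x, F t :=
        lintegral_const_mul' _ _ ofReal_ne_top
    _ = ENNReal.ofReal (Real.exp c) *
          ∫⁻ x in Set.Ioi (0:ℝ), ∫⁻ t in Set.Ioi (0:ℝ), K (x, t) := by
        congr 1
        apply setLIntegral_congr_fun measurableSet_Ioi
        intro x hx
        exact claimA x hx
    _ = ENNReal.ofReal (Real.exp c) *
          ∫⁻ t in Set.Ioi (0:ℝ), ∫⁻ x in Set.Ioi (0:ℝ), K (x, t) := by
        congr 1
        exact lintegral_lintegral_swap hKmeas.aemeasurable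
    _ = ENNReal.ofReal (Real.exp c) *
          ∫⁻ t in Set.Ioi (0:ℝ), ENNReal.ofReal (f t ^ p * t ^ (β * p)) := by
        congr 1
        apply setLIntegral_congr_fun measurableSet_Ioi
        intro t ht
        exact claimB t ht
end

section
/- Let 1 < p ≤ q < ∞ with p' = p/(p-1), let ω₁, ω₂ be weights on (0,∞), and let λ > 0. Suppose y is locally absolutely continuous on (0,∞) with y(t) > 0 and y'(t) > 0 for all t, and y satisfies the nonlinear integro-differential equation (∫_t^∞ (ω₂(x) · y(x)^{1/p'})^q dx)^{1/q} = λ · ω₁(t) · (y'(t))^{1/p'} for every t > 0. Then for every locally absolutely continuous u on (0,∞) with lim_{t→0⁺} u(t) = 0, the weighted norm inequality (∫_0^∞ (|u(x)| · ω₂(x))^q dx)^{1/q} ≤ λ · (∫_0^∞ (|u'(x)| · ω₁(x))^p dx)^{1/p} holds. -/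
open MeasureTheory ENNReal Set


private lemma lint_union_le {h : ℝ → ℝ≥0∞} {s : ℕ → Set ℝ}
    (hms : ∀ n, MeasurableSet (s n)) (hmono : Monotone s)
    (hm : ∀ n, AEMeasurable h (volume.restrict (s n))) {C : ℝ≥0∞}
    (hC : ∀ n, ∫⁻ a in s n, h a ≤ C) :
    ∫⁻ a in ⋃ n, s n, h a ≤ C := by
  have hU : MeasurableSet (⋃ n, s n) := MeasurableSet.iUnion hms
  rw [← lintegral_indicator hU]
  have hpt : (⋃ n, s n).indicator h = fun a => ⨆ n, (s n).indicator h a := by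
    funext a
    by_cases ha : a ∈ ⋃ n, s n
    · obtain ⟨n, hn⟩ := mem_iUnion.1 ha
      rw [indicator_of_mem ha]
      refine le_antisymm (le_iSup_of_le n (by rw [indicator_of_mem hn])) ?_
      exact iSup_le fun m => indicator_le_self' (fun _ _ => zero_le) a
    · have : ∀ n, a ∉ s n := fun n hn => ha (mem_iUnion.2 ⟨n, hn⟩)
      simp [indicator_of_notMem ha, indicator_of_notMem (this _)]
  rw [hpt, lintegral_iSup' (fun n => (aemeasurable_indicator_iff (hms n)).2 (hm n))
    (Filter.Eventually.of_forall fun a i j hij =>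
      indicator_le_indicator_of_subset (hmono hij) (fun _ => zero_le) a)]
  exact iSup_le fun n => by rw [lintegral_indicator (hms n)]; exact hC n

private lemma minkowski_aux {ψ W : ℝ → ℝ≥0∞} (hψ : Measurable ψ) (hW : Measurable W)
    {m : ℝ} (hm : 1 ≤ m)
    (hI : ∫⁻ x in Ioi (0:ℝ), W x * (∫⁻ t in Ioo 0 x, ψ t) ^ m ≠ ⊤) :
    ∫⁻ x in Ioi (0:ℝ), W x * (∫⁻ t in Ioo 0 x, ψ t) ^ m
      ≤ (∫⁻ t in Ioi (0:ℝ), ψ t * (∫⁻ x in Ioi t, W x) ^ m⁻¹) ^ m := by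
  have hm0 : (0:ℝ) < m := lt_of_lt_of_le one_pos hm
  set Q : ℝ → ℝ≥0∞ := fun x => ∫⁻ t in Ioo 0 x, ψ t with hQdef
  have hQmono : Monotone Q := fun a b hab =>
    lintegral_mono_set (Ioo_subset_Ioo_right hab)
  have hQmeas : Measurable Q := hQmono.measurable
  set G : ℝ → ℝ≥0∞ := fun t => ∫⁻ x in Ioi t, W x with hGdef
  change (∫⁻ x in Ioi (0:ℝ), W x * Q x ^ m) ≠ ⊤ at hI
  change ∫⁻ x in Ioi (0:ℝ), W x * Q x ^ m ≤ (∫⁻ t in Ioi (0:ℝ), ψ t * G t ^ m⁻¹) ^ m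
  -- Tonelli step
  have hker : Measurable (Function.uncurry fun x t =>
      (W x * Q x ^ (m - 1)) * (Iio x).indicator ψ t) := by
    have : (Function.uncurry fun x t => (W x * Q x ^ (m - 1)) * (Iio x).indicator ψ t)
        = fun p : ℝ × ℝ => (W p.1 * Q p.1 ^ (m - 1)) *
          (ψ p.2 * {q : ℝ × ℝ | q.2 < q.1}.indicator 1 p) := by
      funext p
      by_cases h : p.2 < p.1 <;>
        simp [Function.uncurry, Set.indicator, h, Set.mem_Iio, mul_comm]
    rw [this]
    exact (((hW.comp measurable_fst).mul ((hQmeas.comp measurable_fst).pow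
      measurable_const)).mul ((hψ.comp measurable_snd).mul
      (measurable_const.indicator (measurableSet_lt measurable_snd measurable_fst))))
  have hswap : ∫⁻ x in Ioi (0:ℝ), W x * Q x ^ m
      = ∫⁻ t in Ioi (0:ℝ), ψ t * ∫⁻ x in Ioi t, W x * Q x ^ (m - 1) := by
    calc ∫⁻ x in Ioi (0:ℝ), W x * Q x ^ m
        = ∫⁻ x in Ioi (0:ℝ), ∫⁻ t in Ioi (0:ℝ),
            (W x * Q x ^ (m - 1)) * (Iio x).indicator ψ t := by
          refine lintegral_congr fun x => ?_
          rw [lintegral_const_mul _ (hψ.indicator measurableSet_Iio),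
            lintegral_indicator measurableSet_Iio,
            Measure.restrict_restrict measurableSet_Iio,
            show Iio x ∩ Ioi (0:ℝ) = Ioo 0 x from by ext t; simp [mem_Ioo, and_comm]]
          have hsplit : Q x ^ (m - 1) * Q x = Q x ^ m := by
            calc Q x ^ (m-1) * Q x = Q x ^ (m-1) * Q x ^ (1:ℝ) := by
                  rw [ENNReal.rpow_one]
              _ = Q x ^ (m-1+1) := (ENNReal.rpow_add_of_nonneg _ _
                  (by linarith) zero_le_one).symm
              _ = Q x ^ m := by norm_num
          rw [mul_assoc, show (∫⁻ a in Ioo 0 x, ψ a) = Q x from rfl, hsplit]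
      _ = ∫⁻ t in Ioi (0:ℝ), ∫⁻ x in Ioi (0:ℝ),
            (W x * Q x ^ (m - 1)) * (Iio x).indicator ψ t := by
          exact lintegral_lintegral_swap hker.aemeasurable
      _ = ∫⁻ t in Ioi (0:ℝ), ψ t * ∫⁻ x in Ioi t, W x * Q x ^ (m - 1) := by
          refine lintegral_congr_ae ?_
          filter_upwards [ae_restrict_mem measurableSet_Ioi] with t ht
          have : (fun x => (W x * Q x ^ (m - 1)) * (Iio x).indicator ψ t)
              = fun x => (Ioi t).indicator (fun x => ψ t * (W x * Q x ^ (m - 1))) x := by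
            funext x
            by_cases h : t < x <;>
              simp [Set.indicator, h, Set.mem_Iio, Set.mem_Ioi, mul_comm]
          rw [this, lintegral_indicator measurableSet_Ioi,
            Measure.restrict_restrict measurableSet_Ioi,
            show Ioi t ∩ Ioi (0:ℝ) = Ioi t from inter_eq_left.2
              (fun z hz => mem_Ioi.2 (lt_trans (mem_Ioi.1 ht) (mem_Ioi.1 hz))),
            lintegral_const_mul _ (f := fun x => W x * Q x ^ (m - 1)) (hW.mul (hQmeas.pow measurable_const))]
  rcases eq_or_lt_of_le hm with hm1 | hm1
  · -- m = 1
    subst hm1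
    rw [hswap]
    simp only [sub_self, ENNReal.rpow_zero, mul_one, inv_one, ENNReal.rpow_one]
    exact le_refl _
  · -- m > 1
    set a : ℝ := m / (m - 1) with ha
    have hm1' : (0:ℝ) < m - 1 := by linarith
    have ha1 : 1 < a := by
      rw [ha, lt_div_iff₀ hm1']; linarith
    have hainv : a⁻¹ + m⁻¹ = 1 := by
      rw [ha]; field_simp; ring
    have hconj : Real.HolderConjugate a m := Real.holderConjugate_iff.2 ⟨ha1, by
      simpa [one_div] using hainv⟩
    set I : ℝ≥0∞ := ∫⁻ x in Ioi (0:ℝ), W x * Q x ^ m with hIdef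
    set J : ℝ≥0∞ := ∫⁻ t in Ioi (0:ℝ), ψ t * G t ^ m⁻¹ with hJdef
    have hinner : ∀ t ∈ Ioi (0:ℝ), (∫⁻ x in Ioi t, W x * Q x ^ (m - 1))
        ≤ I ^ a⁻¹ * G t ^ m⁻¹ := by
      intro t ht
      have hfg : (fun x => W x * Q x ^ (m - 1)) =
          (fun x => W x ^ a⁻¹ * Q x ^ (m - 1)) * fun x => W x ^ m⁻¹ := by
        funext x
        have : W x = W x ^ a⁻¹ * W x ^ m⁻¹ := by
          rw [← ENNReal.rpow_add_of_nonneg _ _ (by positivity) (by positivity),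
            hainv, ENNReal.rpow_one]
        simp only [Pi.mul_apply]
        rw [mul_right_comm, ← this]
      have hfm : Measurable fun x => W x ^ (a⁻¹ : ℝ) * Q x ^ (m - 1) :=
        (hW.pow measurable_const).mul (hQmeas.pow measurable_const)
      have hgm : Measurable fun x => W x ^ (m⁻¹ : ℝ) := hW.pow measurable_const
      have hH := ENNReal.lintegral_mul_le_Lp_mul_Lq (volume.restrict (Ioi t)) hconj
        hfm.aemeasurable hgm.aemeasurable
      rw [← hfg] at hH
      refine le_trans hH ?_
      have e1 : ∀ x : ℝ, (W x ^ a⁻¹ * Q x ^ (m - 1)) ^ a = W x * Q x ^ m := by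
        intro x
        rw [ENNReal.mul_rpow_of_nonneg _ _ (by positivity), ← ENNReal.rpow_mul,
          ← ENNReal.rpow_mul, inv_mul_cancel₀ (by positivity),
          show (m - 1) * a = m from by rw [ha]; field_simp, ENNReal.rpow_one]
      have e2 : ∀ x : ℝ, (W x ^ m⁻¹) ^ m = W x := by
        intro x
        rw [← ENNReal.rpow_mul, inv_mul_cancel₀ (by linarith), ENNReal.rpow_one]
      simp only [e1, e2]
      calc (∫⁻ x in Ioi t, W x * Q x ^ m) ^ (1/a) * (∫⁻ x in Ioi t, W x) ^ (1/m)
          ≤ I ^ (1/a) * G t ^ (1/m) := by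
            refine mul_le_mul' (ENNReal.rpow_le_rpow ?_ (by positivity)) le_rfl
            exact lintegral_mono' (Measure.restrict_mono
              (fun z hz => mem_Ioi.2 (lt_trans (mem_Ioi.1 ht) (mem_Ioi.1 hz))) le_rfl) le_rfl
        _ = I ^ a⁻¹ * G t ^ m⁻¹ := by rw [one_div, one_div]
    have hstep : I ≤ I ^ a⁻¹ * J := by
      refine hswap.trans_le ?_
      calc ∫⁻ t in Ioi (0:ℝ), ψ t * ∫⁻ x in Ioi t, W x * Q x ^ (m-1)
          ≤ ∫⁻ t in Ioi (0:ℝ), I ^ a⁻¹ * (ψ t * G t ^ m⁻¹) := by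
            refine lintegral_mono_ae ?_
            filter_upwards [ae_restrict_mem measurableSet_Ioi] with t ht
            calc ψ t * ∫⁻ x in Ioi t, W x * Q x ^ (m-1)
                ≤ ψ t * (I ^ a⁻¹ * G t ^ m⁻¹) := mul_le_mul' le_rfl (hinner t ht)
              _ = I ^ a⁻¹ * (ψ t * G t ^ m⁻¹) := mul_left_comm _ _ _
        _ = I ^ a⁻¹ * J := lintegral_const_mul' _ _
            (ENNReal.rpow_ne_top_of_nonneg (by positivity) hI)
    by_cases hI0 : I = 0
    · rw [hI0]; exact zero_le
    · have hIa : I ^ a⁻¹ * I ^ m⁻¹ = I := by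
        rw [← ENNReal.rpow_add _ _ hI0 hI, hainv, ENNReal.rpow_one]
      have hkey : I ^ m⁻¹ ≤ J :=
        (ENNReal.mul_le_mul_iff_right
          (ENNReal.rpow_pos (pos_iff_ne_zero.2 hI0) hI).ne'
          (ENNReal.rpow_ne_top_of_nonneg (by positivity) hI)).1 (hIa.le.trans hstep)
      calc I = (I ^ m⁻¹) ^ m := by
            rw [← ENNReal.rpow_mul, inv_mul_cancel₀ (by linarith), ENNReal.rpow_one]
        _ ≤ J ^ m := ENNReal.rpow_le_rpow hkey hm0.le

/-- Constant-exponent case of Lemma 1 of the paper: if the nonlinear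
integro-differential equation
`(∫_t^∞ (ω₂ y^{1/p'})^q dx)^{1/q} = λ ω₁(t) (y'(t))^{1/p'}` has a positive,
increasing, locally absolutely continuous solution `y` on `(0,∞)`, then the
weighted norm inequality `‖u ω₂‖_q ≤ λ ‖u' ω₁‖_p` holds for all locally
absolutely continuous `u` with `u(0⁺) = 0`. -/
theorem hardy_inequality_of_nonlinear_ode_solution
    (p q p' lam : ℝ) (hp : 1 < p) (hpq : p ≤ q) (hp' : p' = p / (p - 1))
    (hlam : 0 < lam)
    (ω₁ ω₂ : ℝ → ℝ)
    (hω₁ : Measurable ω₁) (hω₁0 : ∀ t, 0 ≤ ω₁ t)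
    (hω₁pos : ∀ᵐ t ∂(volume.restrict (Set.Ioi (0 : ℝ))), 0 < ω₁ t)
    (hω₂ : Measurable ω₂) (hω₂0 : ∀ t, 0 ≤ ω₂ t)
    (hω₂pos : ∀ᵐ t ∂(volume.restrict (Set.Ioi (0 : ℝ))), 0 < ω₂ t)
    (y y' : ℝ → ℝ)
    (hy : ∀ t ∈ Set.Ioi (0 : ℝ), 0 < y t)
    (hy' : ∀ t ∈ Set.Ioi (0 : ℝ), 0 < y' t)
    (hyderiv : ∀ t ∈ Set.Ioi (0 : ℝ), HasDerivAt y (y' t) t)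
    (hyFTC : ∀ a b : ℝ, 0 < a → a < b →
      y b - y a = ∫ t in Set.Ioo a b, y' t)
    (hode : ∀ t ∈ Set.Ioi (0 : ℝ),
      (∫⁻ x in Set.Ioi t, ENNReal.ofReal (ω₂ x * y x ^ (1 / p')) ^ q) ^ (1 / q)
        = ENNReal.ofReal (lam * ω₁ t * y' t ^ (1 / p'))) :
    ∀ u u' : ℝ → ℝ,
      (∀ t ∈ Set.Ioi (0 : ℝ), HasDerivAt u (u' t) t) →
      (∀ a b : ℝ, 0 < a → a < b → u b - u a = ∫ t in Set.Ioo a b, u' t) →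
      Filter.Tendsto u (nhdsWithin 0 (Set.Ioi (0 : ℝ))) (nhds 0) →
      (∫⁻ x in Set.Ioi (0 : ℝ), ENNReal.ofReal (|u x| * ω₂ x) ^ q) ^ (1 / q)
        ≤ ENNReal.ofReal lam *
          (∫⁻ x in Set.Ioi (0 : ℝ), ENNReal.ofReal (|u' x| * ω₁ x) ^ p) ^ (1 / p) := by
  intro u u' huderiv huFTC hu0
  have hp0 : (0:ℝ) < p := by linarith
  have hq1 : (1:ℝ) < q := lt_of_lt_of_le hp hpq
  have hq0 : (0:ℝ) < q := by linarith
  have hp1 : (0:ℝ) < p - 1 := by linarith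
  have hp'0 : (0:ℝ) < p' := by rw [hp']; positivity
  have hconj : Real.HolderConjugate p p' :=
    (Real.holderConjugate_iff_eq_conjExponent hp).2 hp'
  set m : ℝ := q / p with hmdef
  have hm0 : (0:ℝ) < m := by positivity
  have hm1 : (1:ℝ) ≤ m := (one_le_div hp0).2 hpq
  have hpm : p * m = q := by rw [hmdef]; field_simp; try ring
  have hqm : q * m⁻¹ = p := by rw [hmdef]; field_simp; try ring
  set F : ℝ≥0∞ := ∫⁻ x in Set.Ioi (0 : ℝ), ENNReal.ofReal (|u' x| * ω₁ x) ^ p with hFdef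
  -- trivial case
  by_cases hF : F = ⊤
  · rw [hF, ENNReal.top_rpow_of_pos (by positivity),
      ENNReal.mul_top (by simp [ENNReal.ofReal_eq_zero]; linarith)]
    exact le_top
  -- basic regularity
  have hder_u : ∀ t ∈ Set.Ioi (0:ℝ), deriv u t = u' t := fun t ht => (huderiv t ht).deriv
  have hder_y : ∀ t ∈ Set.Ioi (0:ℝ), deriv y t = y' t := fun t ht => (hyderiv t ht).deriv
  have hucont : ContinuousOn u (Set.Ioi (0:ℝ)) :=
    fun t ht => (huderiv t ht).continuousAt.continuousWithinAt
  have hycont : ContinuousOn y (Set.Ioi (0:ℝ)) :=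
    fun t ht => (hyderiv t ht).continuousAt.continuousWithinAt
  have hysm : StrictMonoOn y (Set.Ioi (0:ℝ)) := by
    refine strictMonoOn_of_deriv_pos (convex_Ioi 0) hycont ?_
    intro t ht
    rw [interior_Ioi] at ht
    rw [hder_y t ht]; exact hy' t ht
  -- main objects
  set ψ : ℝ → ℝ≥0∞ :=
    fun t => ENNReal.ofReal (|deriv u t| * deriv y t ^ (-(1/p'))) ^ p with hψdef
  have hψm : Measurable ψ :=
    (((measurable_deriv u).abs.mul ((measurable_deriv y).pow measurable_const)).ennreal_ofReal).pow
      measurable_const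
  set yb : ℝ → ℝ := (Set.Ioi (0:ℝ)).indicator y with hybdef
  have hybmono : Monotone yb := by
    intro s t hst
    rcases le_or_gt t 0 with ht | ht
    · rw [hybdef, indicator_of_notMem (by simp only [mem_Ioi, not_lt]; linarith),
        indicator_of_notMem (by simp only [mem_Ioi, not_lt]; linarith)]
    · rcases le_or_gt s 0 with hs | hs
      · rw [hybdef, indicator_of_notMem (by simp only [mem_Ioi, not_lt]; linarith),
          indicator_of_mem (mem_Ioi.2 ht)]
        exact (hy t ht).le
      · rw [hybdef, indicator_of_mem (mem_Ioi.2 hs), indicator_of_mem (mem_Ioi.2 ht)]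
        rcases eq_or_lt_of_le hst with h | h
        · rw [h]
        · exact (hysm hs ht h).le
  set W : ℝ → ℝ≥0∞ := fun x => ENNReal.ofReal (ω₂ x * yb x ^ (1/p')) ^ q with hWdef
  have hWm : Measurable W :=
    ((hω₂.mul (hybmono.measurable.pow measurable_const)).ennreal_ofReal).pow measurable_const
  set Q : ℝ → ℝ≥0∞ := fun x => ∫⁻ t in Set.Ioo 0 x, ψ t with hQdef
  set B : ℝ → ℝ := fun t => lam * ω₁ t * y' t ^ (1/p') with hBdef
  -- the ODE, integrated form
  have hVint : ∀ t ∈ Set.Ioi (0:ℝ), ∫⁻ x in Set.Ioi t, W x = ENNReal.ofReal (B t) ^ q := by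
    intro t ht
    have h1 : ∫⁻ x in Set.Ioi t, W x
        = ∫⁻ x in Set.Ioi t, ENNReal.ofReal (ω₂ x * y x ^ (1/p')) ^ q := by
      refine setLIntegral_congr_fun measurableSet_Ioi (fun x hx => ?_)
      simp only [hWdef, hybdef]
      rw [indicator_of_mem (show x ∈ Set.Ioi (0:ℝ) from mem_Ioi.2 (lt_trans (mem_Ioi.1 ht) (mem_Ioi.1 hx)))]
    have h2 : ∫⁻ x in Set.Ioi t, ENNReal.ofReal (ω₂ x * y x ^ (1/p')) ^ q
        = ((∫⁻ x in Set.Ioi t, ENNReal.ofReal (ω₂ x * y x ^ (1/p')) ^ q) ^ (1/q)) ^ q := by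
      rw [← ENNReal.rpow_mul, show (1/q) * q = 1 from by field_simp, ENNReal.rpow_one]
    rw [h1, h2, hode t ht]
  have hBanti : ∀ s t : ℝ, 0 < s → s ≤ t →
      ENNReal.ofReal (B t) ≤ ENNReal.ofReal (B s) := by
    intro s t hs hst
    have ht : (0:ℝ) < t := lt_of_lt_of_le hs hst
    have e1 := hode s hs
    have e2 := hode t ht
    simp only [hBdef]
    rw [← e1, ← e2]
    exact ENNReal.rpow_le_rpow (lintegral_mono_set (Ioi_subset_Ioi hst)) (by positivity)
  -- the key pointwise identity
  have hKey : ∀ t ∈ Set.Ioi (0:ℝ), ψ t * ENNReal.ofReal (B t) ^ p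
      = ENNReal.ofReal lam ^ p * ENNReal.ofReal (|u' t| * ω₁ t) ^ p := by
    intro t ht
    have hyt : 0 < y' t := hy' t ht
    have e1 : ψ t = ENNReal.ofReal (|u' t| * y' t ^ (-(1/p'))) ^ p := by
      simp only [hψdef, hder_u t ht, hder_y t ht]
    have e2 : (|u' t| * y' t ^ (-(1/p'))) * B t = lam * (|u' t| * ω₁ t) := by
      have h3 : y' t ^ (-(1/p')) * y' t ^ (1/p') = 1 := by
        rw [← Real.rpow_add hyt]; norm_num
      calc (|u' t| * y' t ^ (-(1/p'))) * B t
          = lam * (|u' t| * ω₁ t) * (y' t ^ (-(1/p')) * y' t ^ (1/p')) := by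
            simp only [hBdef]; ring
        _ = lam * (|u' t| * ω₁ t) := by rw [h3, mul_one]
    rw [e1, ← ENNReal.mul_rpow_of_nonneg _ _ hp0.le,
      ← ENNReal.ofReal_mul (by positivity), e2,
      ENNReal.ofReal_mul hlam.le, ENNReal.mul_rpow_of_nonneg _ _ hp0.le]
  -- integrability of y' on subintervals
  have hy'int : ∀ a x : ℝ, 0 < a → a < x → IntegrableOn y' (Set.Ioo a x) volume := by
    intro a x ha hax
    by_contra hni
    have h0 : (∫ t in Set.Ioo a x, y' t) = 0 := integral_undef hni
    have h1 := hyFTC a x ha hax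
    rw [h0] at h1
    have hlt := hysm (mem_Ioi.2 ha) (mem_Ioi.2 (lt_trans ha hax)) hax
    linarith
  -- ∫ y' over (0,x) bounded by y x
  have hyint : ∀ x ∈ Set.Ioi (0:ℝ), (∫⁻ t in Set.Ioo 0 x, ENNReal.ofReal (deriv y t))
      ≤ ENNReal.ofReal (y x) := by
    intro x hx
    have hx0 : (0:ℝ) < x := hx
    have hsub : ∀ a : ℝ, 0 < a → a < x →
        (∫⁻ t in Set.Ioo a x, ENNReal.ofReal (deriv y t)) ≤ ENNReal.ofReal (y x) := by
      intro a ha hax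
      have hcong : (∫⁻ t in Set.Ioo a x, ENNReal.ofReal (deriv y t))
          = ∫⁻ t in Set.Ioo a x, ENNReal.ofReal (y' t) := by
        refine setLIntegral_congr_fun measurableSet_Ioo (fun t ht => ?_)
        rw [hder_y t (mem_Ioi.2 (lt_trans ha ht.1))]
      have hnn : 0 ≤ᵐ[volume.restrict (Set.Ioo a x)] y' :=
        (ae_restrict_iff' measurableSet_Ioo).2 (ae_of_all _
          fun t ht => (hy' t (mem_Ioi.2 (lt_trans ha ht.1))).le)
      rw [hcong, ← ofReal_integral_eq_lintegral_ofReal (hy'int a x ha hax) hnn]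
      refine ENNReal.ofReal_le_ofReal ?_
      have h1 := hyFTC a x ha hax
      have hya : 0 < y a := hy a (mem_Ioi.2 ha)
      linarith
    have hUnion : ⋃ n : ℕ, Set.Ioo (x/((n:ℝ)+2)) x = Set.Ioo 0 x := by
      ext t
      simp only [mem_iUnion, mem_Ioo]
      constructor
      · rintro ⟨n, h1, h2⟩
        have hpos : 0 < x/((n:ℝ)+2) := by positivity
        exact ⟨lt_trans hpos h1, h2⟩
      · rintro ⟨h1, h2⟩
        obtain ⟨n, hn⟩ := exists_nat_gt (x/t)
        refine ⟨n, ?_, h2⟩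
        rw [div_lt_iff₀ (by positivity)]
        rw [div_lt_iff₀ h1] at hn
        nlinarith
    rw [← hUnion]
    refine lint_union_le (fun n => measurableSet_Ioo) ?_ (fun n =>
      ((measurable_deriv y).ennreal_ofReal).aemeasurable) (fun n => ?_)
    · refine monotone_nat_of_le_succ fun n => ?_
      refine Set.Ioo_subset_Ioo ?_ le_rfl
      exact div_le_div_of_nonneg_left hx0.le (by positivity) (by push_cast; linarith)
    · refine hsub _ (by positivity) ?_
      rw [div_lt_iff₀ (by positivity)]
      nlinarith [Nat.cast_nonneg (α := ℝ) n]
  -- |u x| is dominated by the integral of |u'|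
  have hua : ∀ x ∈ Set.Ioi (0:ℝ), ENNReal.ofReal |u x|
      ≤ ∫⁻ t in Set.Ioo 0 x, ENNReal.ofReal |deriv u t| := by
    intro x hx
    have hx0 : (0:ℝ) < x := hx
    set C : ℝ≥0∞ := ∫⁻ t in Set.Ioo 0 x, ENNReal.ofReal |deriv u t| with hCdef
    have hbound : ∀ a : ℝ, 0 < a → a < x →
        ENNReal.ofReal |u x| ≤ ENNReal.ofReal |u a| + C := by
      intro a ha hax
      have h1 : |u x| ≤ |u a| + |u x - u a| := by
        have h := abs_add_le (u a) (u x - u a); simpa using h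
      have h2 : ENNReal.ofReal |u x - u a| ≤ C := by
        rw [show u x - u a = ∫ t in Set.Ioo a x, u' t from huFTC a x ha hax]
        by_cases hint : IntegrableOn u' (Set.Ioo a x) volume
        · calc ENNReal.ofReal |∫ t in Set.Ioo a x, u' t|
              ≤ ENNReal.ofReal (∫ t in Set.Ioo a x, |u' t|) := by
                refine ENNReal.ofReal_le_ofReal ?_
                simpa [Real.norm_eq_abs] using
                  norm_integral_le_integral_norm (μ := volume.restrict (Set.Ioo a x)) u'
            _ = ∫⁻ t in Set.Ioo a x, ENNReal.ofReal |u' t| :=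
                ofReal_integral_eq_lintegral_ofReal hint.abs
                  (ae_of_all _ fun t => abs_nonneg _)
            _ = ∫⁻ t in Set.Ioo a x, ENNReal.ofReal |deriv u t| :=
                setLIntegral_congr_fun measurableSet_Ioo (fun t ht => by
                  rw [hder_u t (mem_Ioi.2 (lt_trans ha ht.1))])
            _ ≤ C := lintegral_mono_set (Set.Ioo_subset_Ioo_left ha.le)
        · rw [integral_undef hint]; simp
      calc ENNReal.ofReal |u x| ≤ ENNReal.ofReal (|u a| + |u x - u a|) :=
            ENNReal.ofReal_le_ofReal h1
        _ ≤ ENNReal.ofReal |u a| + ENNReal.ofReal |u x - u a| := ENNReal.ofReal_add_le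
        _ ≤ ENNReal.ofReal |u a| + C := add_le_add le_rfl h2
    have htend : Filter.Tendsto (fun a => ENNReal.ofReal |u a| + C)
        (nhdsWithin 0 (Set.Ioi (0:ℝ))) (nhds (0 + C)) := by
      refine Filter.Tendsto.add ?_ tendsto_const_nhds
      have h3 : Filter.Tendsto (fun a => |u a|) (nhdsWithin 0 (Set.Ioi (0:ℝ))) (nhds 0) := by
        simpa using hu0.abs
      have h4 := (ENNReal.continuous_ofReal.tendsto 0).comp h3
      rw [ENNReal.ofReal_zero] at h4
      exact h4
    have hev : ∀ᶠ a in nhdsWithin 0 (Set.Ioi (0:ℝ)),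
        ENNReal.ofReal |u x| ≤ ENNReal.ofReal |u a| + C := by
      filter_upwards [Ioo_mem_nhdsGT_of_mem
        (show (0:ℝ) ∈ Set.Ico 0 x from ⟨le_refl _, hx0⟩)] with a ha
      exact hbound a ha.1 ha.2
    have hge := ge_of_tendsto htend hev
    simpa using hge
  -- Hölder pointwise bound
  have hholder : ∀ x ∈ Set.Ioi (0:ℝ),
      ENNReal.ofReal |u x| ≤ Q x ^ (1/p) * ENNReal.ofReal (y x) ^ (1/p') := by
    intro x hx
    have h1 : (∫⁻ t in Set.Ioo 0 x, ENNReal.ofReal |deriv u t|)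
        = ∫⁻ t in Set.Ioo 0 x,
          ((fun t => ENNReal.ofReal (|deriv u t| * deriv y t ^ (-(1/p')))) *
           (fun t => ENNReal.ofReal (deriv y t ^ (1/p')))) t := by
      refine setLIntegral_congr_fun measurableSet_Ioo (fun t ht => ?_)
      have hyt : 0 < y' t := hy' t (mem_Ioi.2 ht.1)
      have hdy : deriv y t = y' t := hder_y t (mem_Ioi.2 ht.1)
      simp only [Pi.mul_apply, hdy]
      rw [← ENNReal.ofReal_mul (mul_nonneg (abs_nonneg _) (Real.rpow_nonneg hyt.le _))]
      congr 1
      rw [mul_assoc, ← Real.rpow_add hyt]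
      norm_num
    have hfm : Measurable (fun t => ENNReal.ofReal (|deriv u t| * deriv y t ^ (-(1/p')))) :=
      ((measurable_deriv u).abs.mul
        ((measurable_deriv y).pow measurable_const)).ennreal_ofReal
    have hgm : Measurable (fun t => ENNReal.ofReal (deriv y t ^ (1/p'))) :=
      ((measurable_deriv y).pow measurable_const).ennreal_ofReal
    have h2 := ENNReal.lintegral_mul_le_Lp_mul_Lq (volume.restrict (Set.Ioo 0 x)) hconj
      (f := fun t => ENNReal.ofReal (|deriv u t| * deriv y t ^ (-(1/p'))))
      (g := fun t => ENNReal.ofReal (deriv y t ^ (1/p')))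
      hfm.aemeasurable hgm.aemeasurable
    have h3 : (∫⁻ t in Set.Ioo 0 x, ENNReal.ofReal (deriv y t ^ (1/p')) ^ p')
        ≤ ENNReal.ofReal (y x) := by
      have hcong : ∀ t ∈ Set.Ioo 0 x,
          ENNReal.ofReal (deriv y t ^ (1/p')) ^ p' = ENNReal.ofReal (deriv y t) := by
        intro t ht
        have hyt : (0:ℝ) < y' t := hy' t (mem_Ioi.2 ht.1)
        have hdy : deriv y t = y' t := hder_y t (mem_Ioi.2 ht.1)
        rw [hdy, ENNReal.ofReal_rpow_of_nonneg (Real.rpow_nonneg hyt.le _) hp'0.le,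
          ← Real.rpow_mul hyt.le, show (1/p') * p' = 1 from by field_simp, Real.rpow_one]
      rw [setLIntegral_congr_fun measurableSet_Ioo hcong]
      exact hyint x hx
    calc ENNReal.ofReal |u x| ≤ ∫⁻ t in Set.Ioo 0 x, ENNReal.ofReal |deriv u t| := hua x hx
      _ ≤ (∫⁻ t in Set.Ioo 0 x, ENNReal.ofReal (|deriv u t| * deriv y t ^ (-(1/p'))) ^ p) ^ (1/p)
          * (∫⁻ t in Set.Ioo 0 x, ENNReal.ofReal (deriv y t ^ (1/p')) ^ p') ^ (1/p') := by
          rw [h1]; exact h2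
      _ ≤ Q x ^ (1/p) * ENNReal.ofReal (y x) ^ (1/p') := by
          exact mul_le_mul' le_rfl (ENNReal.rpow_le_rpow h3 (by positivity))
  -- pointwise bound for the main integrand
  have hptb : ∀ x ∈ Set.Ioi (0:ℝ),
      ENNReal.ofReal (|u x| * ω₂ x) ^ q ≤ W x * Q x ^ m := by
    intro x hx
    have hyx : 0 < y x := hy x hx
    have e0 : ENNReal.ofReal (|u x| * ω₂ x)
        = ENNReal.ofReal |u x| * ENNReal.ofReal (ω₂ x) := ENNReal.ofReal_mul (abs_nonneg _)
    have e1 : W x = (ENNReal.ofReal (ω₂ x) * ENNReal.ofReal (y x) ^ (1/p')) ^ q := by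
      simp only [hWdef, hybdef]
      rw [indicator_of_mem hx, ENNReal.ofReal_rpow_of_nonneg hyx.le (by positivity),
        ← ENNReal.ofReal_mul (hω₂0 x)]
    calc ENNReal.ofReal (|u x| * ω₂ x) ^ q
        ≤ ((Q x ^ (1/p) * ENNReal.ofReal (y x) ^ (1/p')) * ENNReal.ofReal (ω₂ x)) ^ q := by
          rw [e0]; exact ENNReal.rpow_le_rpow (mul_le_mul' (hholder x hx) le_rfl) hq0.le
      _ = W x * Q x ^ m := by
          rw [e1, ENNReal.mul_rpow_of_nonneg _ _ hq0.le, ENNReal.mul_rpow_of_nonneg _ _ hq0.le,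
            ENNReal.mul_rpow_of_nonneg (ENNReal.ofReal (ω₂ x)) _ hq0.le,
            ← ENNReal.rpow_mul (Q x), show (1/p) * q = m from by rw [hmdef]; field_simp; try ring]
          ring
  -- the main truncated chain
  have hchain : ∀ ε X : ℝ, 0 < ε → ε < X → 0 < ω₁ X →
      ∫⁻ x in Set.Ioo ε X, ENNReal.ofReal (|u x| * ω₂ x) ^ q
        ≤ ENNReal.ofReal lam ^ q * F ^ m := by
    intro ε X hε hεX hω₁X
    have hX0 : (0:ℝ) < X := lt_trans hε hεX
    have hBX : 0 < B X := by
      simp only [hBdef]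
      exact mul_pos (mul_pos hlam hω₁X) (Real.rpow_pos_of_pos (hy' X (mem_Ioi.2 hX0)) _)
    have hBXne : ENNReal.ofReal (B X) ^ p ≠ 0 :=
      (ENNReal.rpow_pos (ENNReal.ofReal_pos.2 hBX) ENNReal.ofReal_ne_top).ne'
    have hBXnt : ENNReal.ofReal (B X) ^ p ≠ ⊤ :=
      ENNReal.rpow_ne_top_of_nonneg hp0.le ENNReal.ofReal_ne_top
    set Mv : ℝ≥0∞ := ENNReal.ofReal lam ^ p * F / ENNReal.ofReal (B X) ^ p with hMdef
    have hMnt : Mv ≠ ⊤ := by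
      refine (ENNReal.div_lt_top ?_ hBXne).ne
      exact ENNReal.mul_ne_top
        (ENNReal.rpow_ne_top_of_nonneg hp0.le ENNReal.ofReal_ne_top) hF
    have hQle : ∀ x : ℝ, 0 < x → x ≤ X → Q x ≤ Mv := by
      intro x hx0 hxX
      have hψle : ∀ t ∈ Set.Ioo 0 x, ψ t ≤
          (ENNReal.ofReal lam ^ p * ENNReal.ofReal (|u' t| * ω₁ t) ^ p)
            / ENNReal.ofReal (B X) ^ p := by
        intro t ht
        rw [ENNReal.le_div_iff_mul_le (Or.inl hBXne) (Or.inl hBXnt)]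
        calc ψ t * ENNReal.ofReal (B X) ^ p ≤ ψ t * ENNReal.ofReal (B t) ^ p :=
              mul_le_mul' le_rfl (ENNReal.rpow_le_rpow
                (hBanti t X ht.1 (le_trans ht.2.le hxX)) hp0.le)
          _ = _ := hKey t (mem_Ioi.2 ht.1)
      calc Q x ≤ ∫⁻ t in Set.Ioo 0 x,
            (ENNReal.ofReal lam ^ p * ENNReal.ofReal (|u' t| * ω₁ t) ^ p)
              / ENNReal.ofReal (B X) ^ p :=
            setLIntegral_mono' measurableSet_Ioo hψle
        _ = (∫⁻ t in Set.Ioo 0 x,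
              ENNReal.ofReal lam ^ p * ENNReal.ofReal (|u' t| * ω₁ t) ^ p)
              / ENNReal.ofReal (B X) ^ p := by
            simp only [div_eq_mul_inv]
            exact lintegral_mul_const' _ _ (by simpa using hBXne)
        _ = (ENNReal.ofReal lam ^ p *
              ∫⁻ t in Set.Ioo 0 x, ENNReal.ofReal (|u' t| * ω₁ t) ^ p)
              / ENNReal.ofReal (B X) ^ p := by
            rw [lintegral_const_mul' _ _
              (ENNReal.rpow_ne_top_of_nonneg hp0.le ENNReal.ofReal_ne_top)]
        _ ≤ Mv := by
            rw [hMdef]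
            refine ENNReal.div_le_div_right (mul_le_mul' le_rfl ?_) _
            exact lintegral_mono_set (fun t ht => mem_Ioi.2 ht.1)
    set W' : ℝ → ℝ≥0∞ := (Set.Ioo ε X).indicator W with hW'def
    have hW'm : Measurable W' := hWm.indicator measurableSet_Ioo
    have hIbound : ∫⁻ x in Set.Ioi (0:ℝ), W' x * Q x ^ m
        ≤ Mv ^ m * ENNReal.ofReal (B ε) ^ q := by
      calc ∫⁻ x in Set.Ioi (0:ℝ), W' x * Q x ^ m
          ≤ ∫⁻ x in Set.Ioi (0:ℝ), W' x * Mv ^ m := by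
            refine lintegral_mono fun x => ?_
            by_cases hx : x ∈ Set.Ioo ε X
            · exact mul_le_mul' le_rfl (ENNReal.rpow_le_rpow
                (hQle x (lt_trans hε hx.1) hx.2.le) hm0.le)
            · simp [hW'def, indicator_of_notMem hx]
        _ = Mv ^ m * ∫⁻ x in Set.Ioi (0:ℝ), W' x := by
            simp_rw [mul_comm]
            exact lintegral_const_mul' _ _ (ENNReal.rpow_ne_top_of_nonneg hm0.le hMnt)
        _ ≤ Mv ^ m * ENNReal.ofReal (B ε) ^ q := by
            refine mul_le_mul' le_rfl ?_
            rw [← hVint ε (mem_Ioi.2 hε)]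
            calc ∫⁻ x in Set.Ioi (0:ℝ), W' x
                ≤ ∫⁻ x in Set.Ioi (0:ℝ), (Set.Ioi ε).indicator W x :=
                  lintegral_mono fun x => indicator_le_indicator_of_subset
                    Set.Ioo_subset_Ioi_self (fun _ => zero_le) x
              _ = ∫⁻ x in Set.Ioi ε, W x := by
                  rw [lintegral_indicator measurableSet_Ioi,
                    Measure.restrict_restrict measurableSet_Ioi,
                    inter_eq_left.2 (Ioi_subset_Ioi hε.le)]
    have hIfin : (∫⁻ x in Set.Ioi (0:ℝ), W' x * Q x ^ m) ≠ ⊤ := by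
      refine ne_top_of_le_ne_top ?_ hIbound
      exact ENNReal.mul_ne_top (ENNReal.rpow_ne_top_of_nonneg hm0.le hMnt)
        (ENNReal.rpow_ne_top_of_nonneg hq0.le ENNReal.ofReal_ne_top)
    have hmink := minkowski_aux hψm hW'm hm1 hIfin
    have hJ : (∫⁻ t in Set.Ioi (0:ℝ), ψ t * (∫⁻ x in Set.Ioi t, W' x) ^ m⁻¹)
        ≤ ENNReal.ofReal lam ^ p * F := by
      have hpt : ∀ t ∈ Set.Ioi (0:ℝ), ψ t * (∫⁻ x in Set.Ioi t, W' x) ^ m⁻¹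
          ≤ ENNReal.ofReal lam ^ p * ENNReal.ofReal (|u' t| * ω₁ t) ^ p := by
        intro t ht
        have h5 : (∫⁻ x in Set.Ioi t, W' x) ≤ ENNReal.ofReal (B t) ^ q := by
          rw [← hVint t ht]
          exact lintegral_mono fun x => indicator_le_self' (fun _ _ => zero_le) x
        calc ψ t * (∫⁻ x in Set.Ioi t, W' x) ^ m⁻¹
            ≤ ψ t * (ENNReal.ofReal (B t) ^ q) ^ m⁻¹ :=
              mul_le_mul' le_rfl (ENNReal.rpow_le_rpow h5 (by positivity))
          _ = ψ t * ENNReal.ofReal (B t) ^ p := by rw [← ENNReal.rpow_mul, hqm]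
          _ = _ := hKey t ht
      calc (∫⁻ t in Set.Ioi (0:ℝ), ψ t * (∫⁻ x in Set.Ioi t, W' x) ^ m⁻¹)
          ≤ ∫⁻ t in Set.Ioi (0:ℝ),
              ENNReal.ofReal lam ^ p * ENNReal.ofReal (|u' t| * ω₁ t) ^ p :=
            setLIntegral_mono' measurableSet_Ioi hpt
        _ = ENNReal.ofReal lam ^ p * F :=
            lintegral_const_mul' _ _
              (ENNReal.rpow_ne_top_of_nonneg hp0.le ENNReal.ofReal_ne_top)
    calc ∫⁻ x in Set.Ioo ε X, ENNReal.ofReal (|u x| * ω₂ x) ^ q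
        ≤ ∫⁻ x in Set.Ioo ε X, W x * Q x ^ m :=
          setLIntegral_mono' measurableSet_Ioo
            (fun x hx => hptb x (mem_Ioi.2 (lt_trans hε hx.1)))
      _ = ∫⁻ x in Set.Ioi (0:ℝ), W' x * Q x ^ m := by
          have hfe : (fun x => W' x * Q x ^ m)
              = (Set.Ioo ε X).indicator (fun x => W x * Q x ^ m) := by
            funext x
            by_cases hx : x ∈ Set.Ioo ε X
            · simp [hW'def, indicator_of_mem hx]
            · simp [hW'def, indicator_of_notMem hx]
          rw [hfe, lintegral_indicator measurableSet_Ioo,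
            Measure.restrict_restrict measurableSet_Ioo,
            inter_eq_left.2 (fun x hx => mem_Ioi.2 (lt_trans hε hx.1))]
      _ ≤ (∫⁻ t in Set.Ioi (0:ℝ), ψ t * (∫⁻ x in Set.Ioi t, W' x) ^ m⁻¹) ^ m := hmink
      _ ≤ (ENNReal.ofReal lam ^ p * F) ^ m := ENNReal.rpow_le_rpow hJ hm0.le
      _ = ENNReal.ofReal lam ^ q * F ^ m := by
          rw [ENNReal.mul_rpow_of_nonneg _ _ hm0.le, ← ENNReal.rpow_mul, hpm]
  -- choose good right endpoints
  have hex : ∀ n : ℕ, ∃ x : ℝ, x ∈ Set.Ioo ((n:ℝ)+1) ((n:ℝ)+2) ∧ 0 < ω₁ x := by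
    intro n
    by_contra hcon
    push_neg at hcon
    have hsub : Set.Ioo ((n:ℝ)+1) ((n:ℝ)+2) ⊆ {t : ℝ | ¬ 0 < ω₁ t} := by
      intro x hx
      exact not_lt.2 (hcon x hx)
    have h1 : volume.restrict (Set.Ioi (0:ℝ)) (Set.Ioo ((n:ℝ)+1) ((n:ℝ)+2)) = 0 :=
      measure_mono_null hsub (ae_iff.mp hω₁pos)
    rw [Measure.restrict_apply measurableSet_Ioo,
      inter_eq_left.2 (fun x hx => mem_Ioi.2 (by
        have h2 := hx.1
        have h3 : (0:ℝ) ≤ (n:ℝ) := Nat.cast_nonneg n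
        linarith))] at h1
    rw [Real.volume_Ioo] at h1
    norm_num at h1
  choose X hX1 hX2 using hex
  have hXgt : ∀ n : ℕ, (n:ℝ)+1 < X n := fun n => (hX1 n).1
  have hXlt : ∀ n : ℕ, X n < (n:ℝ)+2 := fun n => (hX1 n).2
  set s : ℕ → Set ℝ := fun n => Set.Ioo (1/((n:ℝ)+1)) (X n) with hsdef
  have hspos : ∀ n, s n ⊆ Set.Ioi (0:ℝ) := by
    intro n t ht
    have : (0:ℝ) < 1/((n:ℝ)+1) := by positivity
    exact mem_Ioi.2 (lt_trans this ht.1)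
  have hsmono : Monotone s := by
    refine monotone_nat_of_le_succ fun n => ?_
    simp only [hsdef]
    refine Set.Ioo_subset_Ioo ?_ ?_
    · exact div_le_div_of_nonneg_left zero_le_one (by positivity) (by push_cast; linarith)
    · have h1 := hXlt n
      have h2 := hXgt (n+1)
      push_cast at h2
      linarith
  have hsU : ⋃ n, s n = Set.Ioi (0:ℝ) := by
    ext x
    simp only [hsdef, mem_iUnion, mem_Ioo, mem_Ioi]
    constructor
    · rintro ⟨n, h1, h2⟩
      have : 0 < 1/((n:ℝ)+1) := by positivity
      linarith
    · intro hx
      obtain ⟨n, hn⟩ := exists_nat_gt (max x (1/x))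
      refine ⟨n, ?_, ?_⟩
      · have h1 : 1/x < (n:ℝ) := lt_of_le_of_lt (le_max_right _ _) hn
        rw [div_lt_iff₀ (by positivity)]
        rw [div_lt_iff₀ hx] at h1
        nlinarith
      · have h2 : x < (n:ℝ) := lt_of_le_of_lt (le_max_left _ _) hn
        have := hXgt n
        linarith
  have hmain : ∫⁻ x in Set.Ioi (0:ℝ), ENNReal.ofReal (|u x| * ω₂ x) ^ q
      ≤ ENNReal.ofReal lam ^ q * F ^ m := by
    rw [← hsU]
    refine lint_union_le (fun n => measurableSet_Ioo) hsmono (fun n => ?_) (fun n => ?_)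
    · have hu_aem : AEMeasurable u (volume.restrict (s n)) :=
        (hucont.mono (hspos n)).aemeasurable measurableSet_Ioo
      have h1 : AEMeasurable (fun x => |u x| * ω₂ x) (volume.restrict (s n)) :=
        (continuous_abs.measurable.comp_aemeasurable hu_aem).mul hω₂.aemeasurable
      have h2 : Measurable (fun z : ℝ≥0∞ => z ^ q) := measurable_id.pow measurable_const
      exact h2.comp_aemeasurable h1.ennreal_ofReal
    · refine hchain _ _ (by positivity) ?_ (hX2 n)
      have h1 : 1/((n:ℝ)+1) ≤ 1 := by
        rw [div_le_one (by positivity)]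
        have : (0:ℝ) ≤ (n:ℝ) := Nat.cast_nonneg n
        linarith
      have h2 := hXgt n
      have : (0:ℝ) ≤ (n:ℝ) := Nat.cast_nonneg n
      linarith
  calc (∫⁻ x in Set.Ioi (0:ℝ), ENNReal.ofReal (|u x| * ω₂ x) ^ q) ^ (1/q)
      ≤ (ENNReal.ofReal lam ^ q * F ^ m) ^ (1/q) :=
        ENNReal.rpow_le_rpow hmain (by positivity)
    _ = ENNReal.ofReal lam * F ^ (1/p) := by
        rw [ENNReal.mul_rpow_of_nonneg _ _ (by positivity), ← ENNReal.rpow_mul,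
          ← ENNReal.rpow_mul, mul_one_div_cancel hq0.ne', ENNReal.rpow_one,
          show m * (1/q) = 1/p from by rw [hmdef]; field_simp; try ring]
end

section
/- Let 1 < p ≤ q < ∞ with p' = p/(p-1), let λ > 0, let ω₂ be a weight on (0,∞), and let ω₁ be a weight on (0,∞) that is differentiable on (0,∞). Suppose y₀ is positive and locally absolutely continuous on (0,∞) with y₀' > 0 locally absolutely continuous, satisfying L(t) := (∫_t^∞ (ω₂(x) · y₀(x)^{1/p'})^q dx)^{1/q} = λ · ω₁(t) · (y₀'(t))^{1/p'} for all t > 0. Define P(t) = −L'(t) and w(t) = y₀(t)/y₀'(t). Then P(t) ≥ 0 for all t > 0, and w satisfies the nonlinear differential equation w'(t) = 1 + p' · ω₁'(t) · w(t)/ω₁(t) + (p'/λ) · w(t)^{1/p' + 1} · P(t) / ( ω₁(t) · y₀(t)^{1/p'} ) for almost every t > 0. -/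
open MeasureTheory ENNReal Set

/-- Constant-exponent case of equation (2.10) in the proof of Lemma 2 of the
paper: if `y₀` is a positive solution of
`L(t) = (∫_t^∞ (ω₂ y₀^{1/p'})^q)^{1/q} = λ ω₁(t)(y₀'(t))^{1/p'}` with `y₀'` positive
and locally absolutely continuous, then `P = -L'` is nonnegative and
`w = y₀/y₀'` satisfies the Riccati-type equation
`w' = 1 + p' ω₁' w/ω₁ + (p'/λ) w^{1/p'+1} P/(ω₁ y₀^{1/p'})` a.e. on `(0,∞)`. -/
theorem riccati_substitution_lemma_two
    (p q p' lam : ℝ) (hp : 1 < p) (hpq : p ≤ q) (hp' : p' = p / (p - 1))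
    (hlam : 0 < lam)
    (ω₁ ω₂ ω₁' : ℝ → ℝ)
    (hω₁ : Measurable ω₁) (hω₁0 : ∀ t, 0 ≤ ω₁ t)
    (hω₁pos : ∀ᵐ t ∂(volume.restrict (Set.Ioi (0 : ℝ))), 0 < ω₁ t)
    (hω₁deriv : ∀ t ∈ Set.Ioi (0 : ℝ), HasDerivAt ω₁ (ω₁' t) t)
    (hω₂ : Measurable ω₂) (hω₂0 : ∀ t, 0 ≤ ω₂ t)
    (hω₂pos : ∀ᵐ t ∂(volume.restrict (Set.Ioi (0 : ℝ))), 0 < ω₂ t)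
    (y₀ y₀' y₀'' : ℝ → ℝ)
    (hy₀ : ∀ t ∈ Set.Ioi (0 : ℝ), 0 < y₀ t)
    (hy₀' : ∀ t ∈ Set.Ioi (0 : ℝ), 0 < y₀' t)
    (hy₀deriv : ∀ t ∈ Set.Ioi (0 : ℝ), HasDerivAt y₀ (y₀' t) t)
    (hy₀FTC : ∀ a b : ℝ, 0 < a → a < b →
      y₀ b - y₀ a = ∫ t in Set.Ioo a b, y₀' t)
    (hy₀''ae : ∀ᵐ t ∂(volume.restrict (Set.Ioi (0 : ℝ))),
      HasDerivAt y₀' (y₀'' t) t)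
    (hy₀'FTC : ∀ a b : ℝ, 0 < a → a < b →
      y₀' b - y₀' a = ∫ t in Set.Ioo a b, y₀'' t)
    (L L' P w w' : ℝ → ℝ)
    (hode : ∀ t ∈ Set.Ioi (0 : ℝ),
      (∫⁻ x in Set.Ioi t, ENNReal.ofReal (ω₂ x * y₀ x ^ (1 / p')) ^ q) ^ (1 / q)
        = ENNReal.ofReal (lam * ω₁ t * y₀' t ^ (1 / p')))
    (hLdef : ∀ t ∈ Set.Ioi (0 : ℝ), L t = lam * ω₁ t * y₀' t ^ (1 / p'))
    (hL' : ∀ t ∈ Set.Ioi (0 : ℝ), HasDerivAt L (L' t) t)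
    (hP : ∀ t, P t = -L' t)
    (hwdef : ∀ t, w t = y₀ t / y₀' t)
    (hw' : ∀ᵐ t ∂(volume.restrict (Set.Ioi (0 : ℝ))), HasDerivAt w (w' t) t) :
    (∀ t ∈ Set.Ioi (0 : ℝ), 0 ≤ P t) ∧
    (∀ᵐ t ∂(volume.restrict (Set.Ioi (0 : ℝ))),
      w' t = 1 + p' * ω₁' t * w t / ω₁ t +
        (p' / lam) * (w t ^ (1 / p' + 1) * P t) / (ω₁ t * y₀ t ^ (1 / p'))) := by
  have hq0 : (0 : ℝ) < q := lt_of_lt_of_le (lt_trans one_pos hp) hpq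
  have hp'pos : 0 < p' := by
    rw [hp']
    exact div_pos (lt_trans one_pos hp) (by linarith)
  -- L is antitone on (0,∞)
  have hanti : AntitoneOn L (Set.Ioi (0 : ℝ)) := by
    intro s hs t ht hst
    rw [hLdef s hs, hLdef t ht]
    rw [← ENNReal.ofReal_le_ofReal_iff
      (mul_nonneg (mul_nonneg hlam.le (hω₁0 s)) (Real.rpow_nonneg (hy₀' s hs).le _))]
    rw [← hode s hs, ← hode t ht]
    exact ENNReal.rpow_le_rpow
      (lintegral_mono_set (Set.Ioi_subset_Ioi hst)) (by positivity)
  -- Part 1: P ≥ 0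
  have hPnn : ∀ t ∈ Set.Ioi (0 : ℝ), 0 ≤ P t := by
    intro t ht
    rw [hP]
    rw [neg_nonneg]
    have hslope : Filter.Tendsto (slope L t) (nhdsWithin t (Set.Ioi t)) (nhds (L' t)) :=
      (hasDerivAt_iff_tendsto_slope.mp (hL' t ht)).mono_left
        (nhdsWithin_mono t fun x hx => ne_of_gt hx)
    refine le_of_tendsto hslope ?_
    have hmem : Set.Ioi t ∈ nhdsWithin t (Set.Ioi t) := self_mem_nhdsWithin
    filter_upwards [hmem] with x hx
    have hx0 : x ∈ Set.Ioi (0 : ℝ) := Set.mem_Ioi.mpr (lt_trans (Set.mem_Ioi.mp ht) (Set.mem_Ioi.mp hx))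
    have hLle : L x ≤ L t := hanti ht hx0 (le_of_lt hx)
    rw [slope_def_field]
    exact div_nonpos_of_nonpos_of_nonneg (by linarith) (by linarith [hx.out])
  refine ⟨hPnn, ?_⟩
  -- Part 2
  filter_upwards [hy₀''ae, hw', hω₁pos, ae_restrict_mem measurableSet_Ioi]
    with t hdd hwd hωpos ht
  have hA : 0 < y₀ t := hy₀ t ht
  have hB : 0 < y₀' t := hy₀' t ht
  -- derivative of w
  have hweq : w = fun x => y₀ x / y₀' x := funext hwdef
  have hw2 : HasDerivAt w ((y₀' t * y₀' t - y₀ t * y₀'' t) / (y₀' t) ^ 2) t := by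
    rw [hweq]; exact (hy₀deriv t ht).div hdd (ne_of_gt hB)
  have hw'eq : w' t = (y₀' t * y₀' t - y₀ t * y₀'' t) / (y₀' t) ^ 2 := hwd.unique hw2
  -- derivative of L
  have hpow : HasDerivAt (fun x => y₀' x ^ (1 / p'))
      (y₀'' t * (1 / p') * y₀' t ^ (1 / p' - 1)) t :=
    hdd.rpow_const (Or.inl (ne_of_gt hB))
  have hg : HasDerivAt (fun x => lam * ω₁ x * y₀' x ^ (1 / p'))
      ((0 * ω₁ t + lam * ω₁' t) * y₀' t ^ (1 / p') +
        lam * ω₁ t * (y₀'' t * (1 / p') * y₀' t ^ (1 / p' - 1))) t :=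
    ((hasDerivAt_const t lam).mul (hω₁deriv t ht)).mul hpow
  have hLg : HasDerivAt L
      ((0 * ω₁ t + lam * ω₁' t) * y₀' t ^ (1 / p') +
        lam * ω₁ t * (y₀'' t * (1 / p') * y₀' t ^ (1 / p' - 1))) t := by
    refine hg.congr_of_eventuallyEq ?_
    filter_upwards [Ioi_mem_nhds ht.out] with x hx
    exact hLdef x hx
  have hL'eq : L' t = (0 * ω₁ t + lam * ω₁' t) * y₀' t ^ (1 / p') +
      lam * ω₁ t * (y₀'' t * (1 / p') * y₀' t ^ (1 / p' - 1)) := (hL' t ht).unique hLg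
  -- algebra
  have hwt : w t = y₀ t / y₀' t := hwdef t
  have hwpos : 0 < w t := by rw [hwt]; positivity
  have hrw1 : w t ^ (1 / p' + 1) = (y₀ t ^ (1 / p') * y₀ t) / (y₀' t ^ (1 / p') * y₀' t) := by
    rw [hwt, Real.div_rpow hA.le hB.le, Real.rpow_add_one (ne_of_gt hA),
      Real.rpow_add_one (ne_of_gt hB)]
  have hrw2 : y₀' t ^ (1 / p' - 1) = y₀' t ^ (1 / p') / y₀' t :=
    Real.rpow_sub_one (ne_of_gt hB) _
  have ha : 0 < y₀ t ^ (1 / p') := Real.rpow_pos_of_pos hA _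
  have hb : 0 < y₀' t ^ (1 / p') := Real.rpow_pos_of_pos hB _
  rw [hw'eq, hP, hL'eq, hrw1, hwt, hrw2]
  have hω0 : ω₁ t ≠ 0 := ne_of_gt hωpos
  field_simp
  ring
end
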